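/- arXiv:0909.1645 — 4 statements merged into one kernel-verified Lean document; each statement's English description precedes it below -/
import Mathlib

section
/- For every n ≥ 1 there exists a POMDP D_n with n + 2 states, action set {a, b}, and deterministic transitions (every δ(l, σ) is a Dirac distribution), with a designated target state Goal forming its own observation while all other states share a single observation, such that: (1) there exists a pure observation-based strategy that is positive winning for Reach({Goal}) from the initial state; and (2) every pure observation-based finite-memory strategy that is positive winning for Reach({Goal}) from the initial state has memory of size at least n. Concretely, D_n has states s_0, …, s_n = Goal and an absorbing state Sink, initial state s_0; for 0 ≤ j ≤ n − 2, action a leads from s_j to s_{j+1} and action b leads from s_j to Sink; from s_{n−1}, action b leads to s_n and action a leads to Sink; s_n and Sink are absorbing. -/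
open scoped ENNReal

/-- A partially-observable Markov decision process (POMDP) with states `L`,
actions `A` and observations `O`: a probabilistic transition function and an
observation function (the observations partition the state space). -/
structure POMDP (L : Type) (A : Type) (O : Type) where
  δ : L → A → PMF L
  obs : L → O

namespace POMDP

variable {L A O : Type}

/-- A (randomized) strategy: given the initial state and the history of
(action, state) steps played so far, it chooses a distribution on actions. -/
abbrev Strategy (L A : Type) := L → List (A × L) → PMF A

/-- The sequence of states visited along a finite prefix. -/
def statesOf (l : L) (h : List (A × L)) : List L := l :: h.map Prod.snd

/-- Auxiliary probability of a finite prefix, for a strategy `π` given as a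
function of the remaining history. -/
noncomputable def prefProbAux (M : POMDP L A O) :
    (List (A × L) → PMF A) → L → List (A × L) → ℝ≥0∞
  | _, _, [] => 1
  | π, l, (a, l') :: h =>
      π [] a * M.δ l a l' * M.prefProbAux (fun h' => π ((a, l') :: h')) l' h

/-- The probability, under strategy `α` from state `l`, that the play starts
with the finite prefix `h` of (action, state) steps. -/
noncomputable def prefProb (M : POMDP L A O) (α : Strategy L A) (l : L)
    (h : List (A × L)) : ℝ≥0∞ :=
  M.prefProbAux (α l) l h

/-- A prefix is consistent with `α` from `l` if it has positive probability. -/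
def Consistent (M : POMDP L A O) (α : Strategy L A) (l : L) (h : List (A × L)) : Prop :=
  0 < M.prefProb α l h

/-- The probability, under strategy `α` from state `l`, that the length-`n`
prefix of the play satisfies the predicate `P`. -/
noncomputable def horizonProb (M : POMDP L A O) [Fintype L] [Fintype A]
    (α : Strategy L A) (l : L) (n : ℕ) (P : List (A × L) → Prop) : ℝ≥0∞ :=
  ∑ f : Fin n → A × L,
    Set.indicator {g : Fin n → A × L | P (List.ofFn g)}
      (fun g => M.prefProb α l (List.ofFn g)) f

/-- `Pr_l^α(Reach(T))`: probability that the play visits a state of `T`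
(as the increasing limit of the finite-horizon reachability probabilities). -/
noncomputable def reachProb (M : POMDP L A O) [Fintype L] [Fintype A]
    (α : Strategy L A) (l : L) (T : Set L) : ℝ≥0∞ :=
  ⨆ n, M.horizonProb α l n (fun h => ∃ s ∈ statesOf l h, s ∈ T)

/-- `Pr_l^α(Safe(T))`: probability that all states of the play lie in `T`
(as the decreasing limit of the finite-horizon safety probabilities). -/
noncomputable def safeProb (M : POMDP L A O) [Fintype L] [Fintype A]
    (α : Strategy L A) (l : L) (T : Set L) : ℝ≥0∞ :=
  ⨅ n, M.horizonProb α l n (fun h => ∀ s ∈ statesOf l h, s ∈ T)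

/-- `Pr_l^α(Until(T₁,T₂))`: probability that the play visits `T₂` at some
position `k` with all positions `≤ k` in `T₁`. -/
noncomputable def untilProb (M : POMDP L A O) [Fintype L] [Fintype A]
    (α : Strategy L A) (l : L) (T₁ T₂ : Set L) : ℝ≥0∞ :=
  ⨆ n, M.horizonProb α l n (fun h => ∃ k, ∃ hk : k < (statesOf l h).length,
      (statesOf l h).get ⟨k, hk⟩ ∈ T₂ ∧
      ∀ j, ∀ hj : j < (statesOf l h).length, j ≤ k → (statesOf l h).get ⟨j, hj⟩ ∈ T₁)

/-- `Pr_l^α(coBüchi(T))`: probability that from some point on all states of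
the play lie in `T`. -/
noncomputable def coBuchiProb (M : POMDP L A O) [Fintype L] [Fintype A]
    (α : Strategy L A) (l : L) (T : Set L) : ℝ≥0∞ :=
  ⨆ k, ⨅ n, M.horizonProb α l n (fun h =>
    ∀ j, ∀ hj : j < (statesOf l h).length, k ≤ j → (statesOf l h).get ⟨j, hj⟩ ∈ T)

/-- `Pr_l^α(Büchi(T))`: probability that the play visits `T` infinitely often. -/
noncomputable def buchiProb (M : POMDP L A O) [Fintype L] [Fintype A]
    (α : Strategy L A) (l : L) (T : Set L) : ℝ≥0∞ :=
  ⨅ k, ⨆ n, M.horizonProb α l n (fun h =>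
    ∃ j, ∃ hj : j < (statesOf l h).length, k ≤ j ∧ (statesOf l h).get ⟨j, hj⟩ ∈ T)

/-- A strategy is observation-based if it plays the same distribution after any
two prefixes with the same sequences of observations and of actions. -/
def ObservationBased (M : POMDP L A O) (α : Strategy L A) : Prop :=
  ∀ l l' (h h' : List (A × L)), M.obs l = M.obs l' →
    h.map Prod.fst = h'.map Prod.fst →
    h.map (fun p => M.obs p.2) = h'.map (fun p => M.obs p.2) →
    α l h = α l' h'

/-- A strategy is pure if it always plays a Dirac distribution. -/
def PureStrategy (α : Strategy L A) : Prop := ∀ l h, ∃ a, α l h = PMF.pure a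

/-- Edge of the underlying graph of the POMDP. -/
def Edge (M : POMDP L A O) (l l' : L) : Prop := ∃ a, 0 < M.δ l a l'

/-- Reachability in the underlying graph of the POMDP. -/
def ReachableFrom (M : POMDP L A O) (l l' : L) : Prop :=
  Relation.ReflTransGen M.Edge l l'

/-- The memory state reached by a memory-update function `u` (together with the
current state) after running through a prefix. -/
def memRun (M : POMDP L A O) {Mem : Type} (u : Mem → O → A → Mem) :
    Mem → L → List (A × L) → Mem × L
  | m, l, [] => (m, l)
  | m, l, (a, l') :: h => M.memRun u (u m (M.obs l) a) l' h

/-- The (observation-based) strategy induced by a finite-memory machine given by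
memory-update function `u`, next-action function `next` and initial memory `m0`. -/
def fmStrategy (M : POMDP L A O) {Mem : Type} (u : Mem → O → A → Mem)
    (next : Mem → O → PMF A) (m0 : Mem) : Strategy L A :=
  fun l h =>
    let p := M.memRun u m0 l h
    next p.1 (M.obs p.2)

/-- The distribution choosing `x` and `y` with probability 1/2 each. -/
noncomputable def half (x y : L) : PMF L :=
  (PMF.uniformOfFintype Bool).map (fun b => if b then x else y)

end POMDP

/-- The deterministic transition of the POMDP `D_n` on states
`s_0, …, s_n = Goal, Sink`, encoded as `Fin (n+2)` with `s_j = j`, `Goal = n`,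
`Sink = n+1`. Action `a = true`, action `b = false`. For `0 ≤ j ≤ n-2`: `a`
leads from `s_j` to `s_{j+1}` and `b` leads to `Sink`; from `s_{n-1}`, `b`
leads to `Goal = s_n` and `a` leads to `Sink`; `Goal` and `Sink` are absorbing. -/
def dnStep (n : ℕ) (s : Fin (n + 2)) (act : Bool) : Fin (n + 2) :=
  if h : n ≤ s.val then s
  else if s.val = n - 1 then
    (if act then ⟨n + 1, by omega⟩ else ⟨n, by omega⟩)
  else
    (if act then ⟨s.val + 1, by omega⟩ else ⟨n + 1, by omega⟩)

/-- The POMDP `D_n`: `n+2` states, action set `{a, b}` (encoded as `Bool`,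
`a = true`, `b = false`), deterministic (Dirac) transitions given by `dnStep`;
the target state `Goal = n` forms its own observation (observation `true`)
while all other states share the single observation `false`. -/
noncomputable def DnM (n : ℕ) : POMDP (Fin (n + 2)) Bool Bool where
  δ := fun s act => PMF.pure (dnStep n s act)
  obs := fun s => decide (s.val = n)


namespace DnAux

variable {Mem : Type} (n : ℕ) (u : Mem → Bool → Bool → Mem) (next : Mem → Bool → Bool)

/-- One step of the product of memory machine and POMDP. -/
def stepFn : Mem × Fin (n + 2) → Mem × Fin (n + 2) :=
  fun p =>
    (u p.1 (decide (p.2.val = n)) (next p.1 (decide (p.2.val = n))),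
     dnStep n p.2 (next p.1 (decide (p.2.val = n))))

/-- The unique history consistent with the deterministic finite-memory strategy. -/
def trace : Mem → Fin (n + 2) → ℕ → List (Bool × Fin (n + 2))
  | _, _, 0 => []
  | m, l, (k+1) =>
      (next m (decide (l.val = n)), dnStep n l (next m (decide (l.val = n)))) ::
        trace (u m (decide (l.val = n)) (next m (decide (l.val = n))))
          (dnStep n l (next m (decide (l.val = n)))) k

lemma trace_length : ∀ (k : ℕ) (m : Mem) (l : Fin (n + 2)),
    (trace n u next m l k).length = k := by
  intro k
  induction k with
  | zero => intro m l; rfl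
  | succ k ih => intro m l; simp [trace, ih]

/-- The strategy induced by the machine. -/
noncomputable def strat (m0 : Mem) : POMDP.Strategy (Fin (n + 2)) Bool :=
  (DnM n).fmStrategy u (fun m o => PMF.pure (next m o)) m0

lemma obs_eq (l : Fin (n + 2)) : (DnM n).obs l = decide (l.val = n) := rfl

lemma strat_apply (m : Mem) (l' : Fin (n + 2)) (h : List (Bool × Fin (n + 2))) :
    strat n u next m l' h =
      PMF.pure (next ((DnM n).memRun u m l' h).1
        (decide (((DnM n).memRun u m l' h).2.val = n))) := rfl

lemma strat_shift (m : Mem) (l l' : Fin (n + 2)) (a : Bool) :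
    (fun h' => strat n u next m l ((a, l') :: h')) =
      strat n u next (u m (decide (l.val = n)) a) l' := rfl

lemma prefProbAux_trace : ∀ (k : ℕ) (m : Mem) (l : Fin (n + 2)),
    (DnM n).prefProbAux (strat n u next m l) l (trace n u next m l k) = 1 := by
  intro k
  induction k with
  | zero => intro m l; rfl
  | succ k ih =>
      intro m l
      show (DnM n).prefProbAux (strat n u next m l) l
        ((next m (decide (l.val = n)), dnStep n l (next m (decide (l.val = n)))) ::
          trace n u next _ _ k) = 1
      rw [POMDP.prefProbAux]
      rw [strat_shift]
      rw [ih]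
      have h1 : strat n u next m l [] (next m (decide (l.val = n))) = 1 := by
        rw [strat_apply]
        simp [POMDP.memRun]
        rfl
      have h2 : (DnM n).δ l (next m (decide (l.val = n)))
          (dnStep n l (next m (decide (l.val = n)))) = 1 := by
        simp [DnM]
      rw [h1, h2]
      simp

lemma prefProbAux_ne_zero : ∀ (h : List (Bool × Fin (n + 2))) (m : Mem) (l : Fin (n + 2)),
    (DnM n).prefProbAux (strat n u next m l) l h ≠ 0 →
      h = trace n u next m l h.length := by
  intro h
  induction h with
  | nil => intro m l _; rfl
  | cons p t ih =>
      intro m l hne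
      obtain ⟨a, l'⟩ := p
      rw [POMDP.prefProbAux] at hne
      have h1 : strat n u next m l [] a ≠ 0 := by
        intro hz; apply hne; rw [hz]; simp
      have h2 : (DnM n).δ l a l' ≠ 0 := by
        intro hz; apply hne; rw [hz]; simp
      have h3 : (DnM n).prefProbAux (fun h' => strat n u next m l ((a, l') :: h')) l' t ≠ 0 := by
        intro hz; apply hne; rw [hz]; simp
      have ha : a = next m (decide (l.val = n)) := by
        rw [strat_apply] at h1
        simp only [POMDP.memRun] at h1
        by_contra hc
        apply h1
        rw [PMF.pure_apply]
        exact if_neg hc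
      have hl' : l' = dnStep n l a := by
        by_contra hc
        apply h2
        show (PMF.pure (dnStep n l a)) l' = 0
        rw [PMF.pure_apply, if_neg hc]
      rw [strat_shift] at h3
      have := ih _ _ h3
      subst ha; subst hl'
      show _ = trace n u next m l (t.length + 1)
      rw [trace]
      rw [← this]

lemma mem_statesOf_trace : ∀ (k : ℕ) (m : Mem) (l : Fin (n + 2))
    (s : Fin (n + 2)), s ∈ POMDP.statesOf l (trace n u next m l k) →
      ∃ i ≤ k, ((stepFn n u next)^[i] (m, l)).2 = s := by
  intro k
  induction k with
  | zero =>
      intro m l s hs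
      simp [trace, POMDP.statesOf] at hs
      exact ⟨0, le_refl 0, hs.symm⟩
  | succ k ih =>
      intro m l s hs
      rw [trace] at hs
      simp only [POMDP.statesOf, List.map_cons, List.mem_cons] at hs
      rcases hs with hs | hs
      · exact ⟨0, Nat.zero_le _, hs.symm⟩
      · have : s ∈ POMDP.statesOf (dnStep n l (next m (decide (l.val = n))))
            (trace n u next (u m (decide (l.val = n)) (next m (decide (l.val = n))))
              (dnStep n l (next m (decide (l.val = n)))) k) := by
          simp only [POMDP.statesOf, List.mem_cons]
          simpa using hs
        obtain ⟨i, hik, hi⟩ := ih _ _ _ this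
        refine ⟨i + 1, by omega, ?_⟩
        rw [Function.iterate_succ_apply]
        exact hi

lemma stepFn_mem_statesOf_trace : ∀ (k : ℕ) (m : Mem) (l : Fin (n + 2)) (i : ℕ), i ≤ k →
    ((stepFn n u next)^[i] (m, l)).2 ∈ POMDP.statesOf l (trace n u next m l k) := by
  intro k
  induction k with
  | zero =>
      intro m l i hi
      interval_cases i
      simp [trace, POMDP.statesOf]
  | succ k ih =>
      intro m l i hi
      match i with
      | 0 => simp [POMDP.statesOf]
      | (i+1) =>
          rw [Function.iterate_succ_apply]
          rw [trace]
          simp only [POMDP.statesOf, List.map_cons, List.mem_cons]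
          right
          have := ih (u m (decide (l.val = n)) (next m (decide (l.val = n))))
            (dnStep n l (next m (decide (l.val = n)))) i (by omega)
          simp only [POMDP.statesOf, List.mem_cons] at this
          simpa [stepFn] using this

/-- Positive reachability from the induced run. -/
lemma reach_pos (m0 : Mem) (l : Fin (n + 2)) (T : Set (Fin (n + 2)))
    (hex : ∃ i, ((stepFn n u next)^[i] (m0, l)).2 ∈ T) :
    0 < (DnM n).reachProb (strat n u next m0) l T := by
  classical
  obtain ⟨i, hi⟩ := hex
  set h : List (Bool × Fin (n + 2)) := trace n u next m0 l i with hh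
  have hlen : h.length = i := trace_length n u next i m0 l
  have hP : ∃ s ∈ POMDP.statesOf l h, s ∈ T := by
    refine ⟨((stepFn n u next)^[i] (m0, l)).2, ?_, hi⟩
    have := stepFn_mem_statesOf_trace n u next i m0 l i (le_refl i)
    exact this
  have hpref : (DnM n).prefProb (strat n u next m0) l h = 1 := by
    exact prefProbAux_trace n u next i m0 l
  have hle : (1 : ENNReal) ≤ (DnM n).horizonProb (strat n u next m0) l h.length
      (fun h' => ∃ s ∈ POMDP.statesOf l h', s ∈ T) := by
    rw [POMDP.horizonProb]
    have hf : List.ofFn h.get = h := List.ofFn_get h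
    calc (1 : ENNReal)
        = Set.indicator {g : Fin h.length → Bool × Fin (n + 2) |
            ∃ s ∈ POMDP.statesOf l (List.ofFn g), s ∈ T}
            (fun g => (DnM n).prefProb (strat n u next m0) l (List.ofFn g)) h.get := by
          rw [Set.indicator_of_mem]
          · rw [hf, hpref]
          · show ∃ s ∈ POMDP.statesOf l (List.ofFn h.get), s ∈ T
            rw [hf]; exact hP
      _ ≤ _ := Finset.single_le_sum (fun g _ => zero_le) (Finset.mem_univ h.get)
  have : (1 : ENNReal) ≤ (DnM n).reachProb (strat n u next m0) l T := by
    refine le_trans hle ?_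
    exact le_iSup (fun k => (DnM n).horizonProb (strat n u next m0) l k
      (fun h' => ∃ s ∈ POMDP.statesOf l h', s ∈ T)) h.length
  exact lt_of_lt_of_le zero_lt_one this

/-- Converse: positive reachability implies the induced run visits `T`. -/
lemma reach_pos_run (m0 : Mem) (l : Fin (n + 2)) (T : Set (Fin (n + 2)))
    (hpos : 0 < (DnM n).reachProb (strat n u next m0) l T) :
    ∃ i, ((stepFn n u next)^[i] (m0, l)).2 ∈ T := by
  classical
  rw [POMDP.reachProb] at hpos
  have hne : (⨆ k, (DnM n).horizonProb (strat n u next m0) l k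
      (fun h' => ∃ s ∈ POMDP.statesOf l h', s ∈ T)) ≠ 0 := ne_of_gt hpos
  rw [Ne, ENNReal.iSup_eq_zero] at hne
  push_neg at hne
  obtain ⟨k, hk⟩ := hne
  rw [POMDP.horizonProb] at hk
  obtain ⟨g, -, hg⟩ := Finset.exists_ne_zero_of_sum_ne_zero hk
  rw [Set.indicator_apply_ne_zero] at hg
  obtain ⟨hgP, hgs⟩ := hg
  have hpref : (DnM n).prefProb (strat n u next m0) l (List.ofFn g) ≠ 0 := hgs
  have htr : List.ofFn g = trace n u next m0 l (List.ofFn g).length :=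
    prefProbAux_ne_zero n u next (List.ofFn g) m0 l hpref
  obtain ⟨s, hs1, hs2⟩ := hgP
  rw [htr] at hs1
  obtain ⟨i, -, hi⟩ := mem_statesOf_trace n u next _ m0 l s hs1
  exact ⟨i, hi ▸ hs2⟩

end DnAux


namespace DnAux

lemma dnStep_val (n : ℕ) (s : Fin (n + 2)) (a : Bool) :
    (dnStep n s a).val =
      if n ≤ s.val then s.val
      else if s.val = n - 1 then (if a then n + 1 else n)
      else (if a then s.val + 1 else n + 1) := by
  rw [dnStep]
  split_ifs <;> rfl

/-- memRun of the counting machine counts the history length. -/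
lemma memRun_count (n : ℕ) :
    ∀ (h : List (Bool × Fin (n + 2))) (m : ℕ) (l : Fin (n + 2)),
      ((DnM n).memRun (fun (m : ℕ) _ _ => m + 1) m l h).1 = m + h.length := by
  intro h
  induction h with
  | nil => intro m l; simp [POMDP.memRun]
  | cons p t ih =>
      intro m l
      obtain ⟨a, l'⟩ := p
      rw [POMDP.memRun, ih]
      simp
      omega

/-- Periodicity of iterates once a repetition happens. -/
lemma iter_per {Mem : Type} (g : Mem → Mem) (m0 : Mem) (i j : ℕ) (hij : i < j)
    (hrep : g^[i] m0 = g^[j] m0) :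
    ∀ d, g^[i + d] m0 = g^[i + d % (j - i)] m0 := by
  intro d
  induction d using Nat.strong_induction_on with
  | _ d ih =>
      by_cases hd : d < j - i
      · rw [Nat.mod_eq_of_lt hd]
      · push_neg at hd
        have h3 : d % (j - i) = (d - (j - i)) % (j - i) := Nat.mod_eq_sub_mod hd
        rw [h3]
        have h1 : i + d = (d - (j - i)) + j := by omega
        rw [h1, Function.iterate_add_apply, ← hrep, ← Function.iterate_add_apply]
        have h2 : (d - (j - i)) + i = i + (d - (j - i)) := by omega
        rw [h2, ih (d - (j - i)) (by omega)]

section Run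

variable {Mem : Type} (n : ℕ) (u : Mem → Bool → Bool → Mem) (next : Mem → Bool → Bool)
  (m0 : Mem)

/-- The run of the machine on the POMDP. -/
def runP (i : ℕ) : Mem × Fin (n + 2) := (stepFn n u next)^[i] (m0, (0 : Fin (n + 2)))

lemma runP_succ (i : ℕ) :
    runP n u next m0 (i + 1) = stepFn n u next (runP n u next m0 i) :=
  Function.iterate_succ_apply' _ _ _

lemma runP_shift (d i : ℕ) :
    runP n u next m0 (d + i) = (stepFn n u next)^[d] (runP n u next m0 i) :=
  Function.iterate_add_apply _ _ _ _

/-- The run of the counting strategy goes straight to the goal. -/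
lemma run1 (hn : 1 ≤ n) :
    ∀ i, i ≤ n →
      (runP n (fun (m : ℕ) _ _ => m + 1) (fun m _ => decide (m + 1 ≠ n)) 0 i).1 = i ∧
      ((runP n (fun (m : ℕ) _ _ => m + 1) (fun m _ => decide (m + 1 ≠ n)) 0 i).2).val = i := by
  intro i
  induction i with
  | zero =>
      intro _
      exact ⟨rfl, by simp [runP]⟩
  | succ i ih =>
      intro hi
      obtain ⟨ihm, ihs⟩ := ih (by omega)
      have hin : i < n := by omega
      have hPi : runP n (fun (m : ℕ) _ _ => m + 1) (fun m _ => decide (m + 1 ≠ n)) 0 i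
          = (i, ⟨i, by omega⟩) := Prod.ext ihm (Fin.ext ihs)
      rw [runP_succ, hPi]
      refine ⟨rfl, ?_⟩
      show (dnStep n ⟨i, by omega⟩ (decide (i + 1 ≠ n))).val = i + 1
      rw [dnStep_val]
      rw [if_neg (show ¬ n ≤ i by omega)]
      by_cases hE : i = n - 1
      · rw [if_pos (show (i : ℕ) = n - 1 from hE)]
        have hact : (decide (i + 1 ≠ n)) = false := by
          simp only [decide_eq_false_iff_not, ne_eq, not_not]; omega
        rw [hact]
        simp; omega
      · rw [if_neg (show ¬ (i : ℕ) = n - 1 from hE)]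
        have hact : (decide (i + 1 ≠ n)) = true := by
          simp only [decide_eq_true_eq, ne_eq]; omega
        rw [hact]
        simp

/-- Absorbing states stay absorbed along the run. -/
lemma absorb (c : Fin (n + 2)) (hc : n ≤ c.val) :
    ∀ (d : ℕ) (x : Mem × Fin (n + 2)), x.2 = c → ((stepFn n u next)^[d] x).2 = c := by
  intro d
  induction d with
  | zero => intro x hx; exact hx
  | succ d ih =>
      intro x hx
      rw [Function.iterate_succ_apply]
      apply ih
      show dnStep n x.2 _ = c
      rw [hx, dnStep, dif_pos hc]

/-- If the run reaches the goal, then the run's prefix is the straight path,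
with memory evolving by `g m = u m false (next m false)`. -/
lemma run_goal (hn : 1 ≤ n) (t : ℕ)
    (ht : ((runP n u next m0 t).2).val = n) :
    ∀ i ≤ n,
      (runP n u next m0 i).1 = (fun m => u m false (next m false))^[i] m0 ∧
      ((runP n u next m0 i).2).val = i := by
  intro i
  induction i with
  | zero =>
      intro _
      exact ⟨rfl, by simp [runP]⟩
  | succ i ih =>
      intro hi
      obtain ⟨ihm, ihs⟩ := ih (by omega)
      have hilt : i < n := by omega
      have hobs : (decide (((runP n u next m0 i).2).val = n)) = false := by
        simp only [decide_eq_false_iff_not]; omega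
      have hmem : (runP n u next m0 (i + 1)).1 =
          (fun m => u m false (next m false))^[i + 1] m0 := by
        rw [runP_succ]
        show u (runP n u next m0 i).1 (decide (((runP n u next m0 i).2).val = n))
            (next (runP n u next m0 i).1 (decide (((runP n u next m0 i).2).val = n)))
          = _
        rw [hobs, ihm, Function.iterate_succ_apply']
      have hstateval : ((runP n u next m0 (i + 1)).2).val =
          (dnStep n (runP n u next m0 i).2
            (next ((fun m => u m false (next m false))^[i] m0) false)).val := by
        rw [runP_succ]
        show (dnStep n (runP n u next m0 i).2
            (next (runP n u next m0 i).1 (decide (((runP n u next m0 i).2).val = n)))).val = _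
        rw [hobs, ihm]
      have hv : ((runP n u next m0 (i + 1)).2).val =
          if i = n - 1 then
            (if next ((fun m => u m false (next m false))^[i] m0) false then n + 1 else n)
          else
            (if next ((fun m => u m false (next m false))^[i] m0) false then i + 1 else n + 1)
          := by
        rw [hstateval, dnStep_val, ihs, if_neg (by omega)]
      have hnosink : ((runP n u next m0 (i + 1)).2).val ≠ n + 1 := by
        intro hsink
        rcases le_or_gt t i with htle | htgt
        · have habs := absorb n u next ⟨n, by omega⟩ (le_refl n) (i - t)
            (runP n u next m0 t) (Fin.ext ht)
          rw [← runP_shift, Nat.sub_add_cancel htle] at habs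
          have := congrArg Fin.val habs
          simp only [ihs] at this
          omega
        · have habs := absorb n u next ⟨n + 1, by omega⟩ (by simp) (t - (i + 1))
            (runP n u next m0 (i + 1)) (Fin.ext hsink)
          rw [← runP_shift, Nat.sub_add_cancel (by omega)] at habs
          have hval : ((runP n u next m0 t).2).val = n + 1 := by rw [habs]
          omega
      refine ⟨hmem, ?_⟩
      rw [hv]
      rw [hv] at hnosink
      split_ifs at hnosink ⊢ <;> omega

/-- The actions along a goal-reaching run. -/
lemma run_act (hn : 1 ≤ n) (t : ℕ)
    (ht : ((runP n u next m0 t).2).val = n) (i : ℕ) (hi : i + 1 ≤ n) :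
    next ((fun m => u m false (next m false))^[i] m0) false = decide (i ≠ n - 1) := by
  obtain ⟨ihm, ihs⟩ := run_goal n u next m0 hn t ht i (by omega)
  obtain ⟨-, ihs'⟩ := run_goal n u next m0 hn t ht (i + 1) hi
  have hobs : (decide (((runP n u next m0 i).2).val = n)) = false := by
    simp only [decide_eq_false_iff_not]; omega
  have hstateval : ((runP n u next m0 (i + 1)).2).val =
      (dnStep n (runP n u next m0 i).2
        (next ((fun m => u m false (next m false))^[i] m0) false)).val := by
    rw [runP_succ]
    show (dnStep n (runP n u next m0 i).2
        (next (runP n u next m0 i).1 (decide (((runP n u next m0 i).2).val = n)))).val = _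
    rw [hobs, ihm]
  rw [ihs', dnStep_val, ihs, if_neg (by omega)] at hstateval
  rcases Bool.eq_false_or_eq_true (next ((fun m => u m false (next m false))^[i] m0) false)
    with hb | hb <;> rw [hb] at hstateval ⊢ <;> split_ifs at hstateval <;>
    simp_all

end Run

end DnAux

/-- For every `n ≥ 1`, in the POMDP `D_n` (with initial state
`s_0 = 0` and target `Goal = n`): (1) there is a pure observation-based strategy
that is positive winning for `Reach({Goal})`; and (2) every pure observation-based
finite-memory strategy positive winning for `Reach({Goal})` from `s_0` has memory
of size at least `n`. -/
theorem dn_positive_reach_linear_memory_lower_bound (n : ℕ) (hn : 1 ≤ n) :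
    (∃ α : POMDP.Strategy (Fin (n + 2)) Bool,
        POMDP.PureStrategy α ∧ (DnM n).ObservationBased α ∧
        0 < (DnM n).reachProb α 0 {(⟨n, by omega⟩ : Fin (n + 2))}) ∧
    (∀ (Mem : Type) (iM : Fintype Mem) (m0 : Mem)
        (u : Mem → Bool → Bool → Mem) (next : Mem → Bool → Bool),
        0 < (DnM n).reachProb
              ((DnM n).fmStrategy u (fun m o => PMF.pure (next m o)) m0)
              0 {(⟨n, by omega⟩ : Fin (n + 2))} →
        n ≤ @Fintype.card Mem iM) := by
  classical
  constructor
  · -- Part (1): the counting strategy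
    refine ⟨DnAux.strat n (fun (m : ℕ) _ _ => m + 1) (fun m _ => decide (m + 1 ≠ n)) 0,
      ?_, ?_, ?_⟩
    · intro l h
      exact ⟨_, DnAux.strat_apply n _ _ 0 l h⟩
    · intro l l' h h' _ hfst _
      have hlen : h.length = h'.length := by
        have := congrArg List.length hfst
        simpa using this
      rw [DnAux.strat_apply, DnAux.strat_apply]
      simp only [DnAux.memRun_count, hlen]
    · apply DnAux.reach_pos
      refine ⟨n, ?_⟩
      have h1 := (DnAux.run1 n hn n (le_refl n)).2
      have : ((DnAux.stepFn n (fun (m : ℕ) _ _ => m + 1)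
          (fun m _ => decide (m + 1 ≠ n)))^[n] ((0 : ℕ), (0 : Fin (n + 2)))).2
          = (⟨n, by omega⟩ : Fin (n + 2)) := Fin.ext h1
      rw [Set.mem_singleton_iff]
      exact this
  · -- Part (2): memory lower bound
    intro Mem iM m0 u next hpos
    letI := iM
    obtain ⟨t, ht⟩ := DnAux.reach_pos_run n u next m0 0 _ hpos
    rw [Set.mem_singleton_iff] at ht
    have htv : ((DnAux.runP n u next m0 t).2).val = n := congrArg Fin.val ht
    by_contra hlt
    push_neg at hlt
    have hm0 : 0 < Fintype.card Mem := Fintype.card_pos_iff.mpr ⟨m0⟩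
    have hn2 : 2 ≤ n := by omega
    obtain ⟨x, y, hxy, hfeq⟩ := Fintype.exists_ne_map_eq_of_card_lt
      (fun i : Fin n => (fun m => u m false (next m false))^[i.val] m0)
      (by simpa using hlt)
    -- extract i < j with a repetition
    obtain ⟨i, j, hij, hjn, hrep⟩ :
        ∃ i j : ℕ, i < j ∧ j < n ∧
          (fun m => u m false (next m false))^[i] m0 =
            (fun m => u m false (next m false))^[j] m0 := by
      rcases hxy.lt_or_gt with hc | hc
      · exact ⟨x.val, y.val, hc, y.isLt, hfeq⟩
      · exact ⟨y.val, x.val, hc, x.isLt, hfeq.symm⟩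
    have hper := DnAux.iter_per (fun m => u m false (next m false)) m0 i j hij hrep (n - 1 - i)
    have hiadd : i + (n - 1 - i) = n - 1 := by omega
    have hmodlt : (n - 1 - i) % (j - i) < j - i := Nat.mod_lt _ (by omega)
    have hr : i + (n - 1 - i) % (j - i) ≤ n - 2 := by omega
    rw [hiadd] at hper
    have hA1 := DnAux.run_act n u next m0 (by omega) t htv (n - 1) (by omega)
    have hA2 := DnAux.run_act n u next m0 (by omega) t htv
      (i + (n - 1 - i) % (j - i)) (by omega)
    rw [hper, hA2] at hA1
    have h1 : decide (i + (n - 1 - i) % (j - i) ≠ n - 1) = true := by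
      simp only [decide_eq_true_eq, ne_eq]
      omega
    have h2 : decide (n - 1 ≠ n - 1) = false := by simp
    rw [h1, h2] at hA1
    exact Bool.noConfusion hA1
end

section
/- Let G = (L, Σ, δ, O) be a POMDP and T ⊆ L. If Player 1 has an observation-based strategy that is positive winning for Safe(T) from some state l, then there exists a state l' ∈ L such that (a) Player 1 has an observation-based strategy that is positive winning for Until(T, {l'}) from l, and (b) Player 1 has an observation-based strategy that is almost-sure winning for Safe(T) from l'. -/
open scoped ENNReal

namespace POMDPProof

open POMDP

variable {L A O : Type}

/-- Shifted strategy: behave as `α` from `l` after the prefix `h` has happened. -/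
noncomputable def shift (α : Strategy L A) (l : L) (h : List (A × L)) : Strategy L A :=
  fun _ h' => α l (h ++ h')

/-- Last state of a prefix. -/
def lastSt (l : L) (h : List (A × L)) : L :=
  (POMDP.statesOf l h).getLast (by simp [POMDP.statesOf])

@[simp] lemma lastSt_nil (l : L) : lastSt l ([] : List (A × L)) = l := rfl

lemma statesOf_cons (l l₀ : L) (a : A) (h : List (A × L)) :
    POMDP.statesOf l ((a, l₀) :: h) = l :: POMDP.statesOf l₀ h := by
  simp [POMDP.statesOf]

lemma lastSt_cons (l l₀ : L) (a : A) (h : List (A × L)) :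
    lastSt l ((a, l₀) :: h) = lastSt l₀ h := by
  unfold lastSt
  exact (List.getLast_congr _ _ (statesOf_cons l l₀ a h)).trans (List.getLast_cons _)

lemma shift_obs (M : POMDP L A O) {α : Strategy L A} (hα : M.ObservationBased α)
    (l : L) (h : List (A × L)) : M.ObservationBased (shift α l h) := by
  intro l₁ l₂ h₁ h₂ _ hact hobs
  exact hα l l (h ++ h₁) (h ++ h₂) rfl (by simp [hact]) (by simp [hobs])

lemma prefProb_nil (M : POMDP L A O) (α : Strategy L A) (l : L) :
    M.prefProb α l [] = 1 := rfl

lemma prefProb_cons (M : POMDP L A O) (α : Strategy L A) (l l₀ : L) (a : A)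
    (h : List (A × L)) :
    M.prefProb α l ((a, l₀) :: h) =
      α l [] a * M.δ l a l₀ * M.prefProb (shift α l [(a, l₀)]) l₀ h := rfl

lemma shift_shift (α : Strategy L A) (l l₀ : L) (h₁ h₂ : List (A × L)) :
    shift (shift α l h₁) l₀ h₂ = shift α l (h₁ ++ h₂) := by
  funext l' h'
  simp [shift, List.append_assoc]

lemma prefProb_le_one (M : POMDP L A O) (α : Strategy L A) (l : L)
    (h : List (A × L)) : M.prefProb α l h ≤ 1 := by
  induction h generalizing α l with
  | nil => exact le_rfl
  | cons p h ih =>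
    obtain ⟨a, l₀⟩ := p
    rw [prefProb_cons]
    exact mul_le_one' (mul_le_one' (PMF.coe_le_one _ _) (PMF.coe_le_one _ _)) (ih _ _)

lemma prefProb_ne_top (M : POMDP L A O) (α : Strategy L A) (l : L)
    (h : List (A × L)) : M.prefProb α l h ≠ ⊤ :=
  fun ht => by simpa [ht] using prefProb_le_one M α l h

open Classical in
lemma horizonProb_eq (M : POMDP L A O) [Fintype L] [Fintype A]
    (α : Strategy L A) (l : L) (n : ℕ) (P : List (A × L) → Prop) :
    M.horizonProb α l n P =
      ∑ f : Fin n → A × L,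
        if P (List.ofFn f) then M.prefProb α l (List.ofFn f) else 0 := by
  unfold POMDP.horizonProb
  refine Finset.sum_congr rfl fun f _ => ?_
  rw [Set.indicator_apply]
  rfl

open Classical in
lemma horizonProb_zero (M : POMDP L A O) [Fintype L] [Fintype A]
    (α : Strategy L A) (l : L) (P : List (A × L) → Prop) :
    M.horizonProb α l 0 P = if P [] then 1 else 0 := by
  rw [horizonProb_eq, Fintype.sum_unique]
  simp [prefProb_nil]

lemma ofFn_cons {n : ℕ} (p : A × L) (g : Fin n → A × L) :
    List.ofFn (Fin.cons p g) = p :: List.ofFn g := by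
  simp [List.ofFn_succ]

open Classical in
lemma horizonProb_succ (M : POMDP L A O) [Fintype L] [Fintype A]
    (α : Strategy L A) (l : L) (n : ℕ) (P : List (A × L) → Prop) :
    M.horizonProb α l (n + 1) P =
      ∑ p : A × L, α l [] p.1 * M.δ l p.1 p.2 *
        M.horizonProb (shift α l [p]) p.2 n (fun h => P (p :: h)) := by
  rw [horizonProb_eq]
  rw [← (Fin.consEquiv (fun _ : Fin (n+1) => A × L)).sum_comp
      (fun f => if P (List.ofFn f) then M.prefProb α l (List.ofFn f) else 0)]
  rw [Fintype.sum_prod_type]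
  refine Finset.sum_congr rfl fun p _ => ?_
  rw [horizonProb_eq, Finset.mul_sum]
  refine Finset.sum_congr rfl fun g _ => ?_
  have : List.ofFn (Fin.consEquiv (fun _ : Fin (n+1) => A × L) (p, g)) =
      p :: List.ofFn g := ofFn_cons p g
  obtain ⟨a, l₀⟩ := p
  rw [this, prefProb_cons]
  by_cases hp : P ((a, l₀) :: List.ofFn g) <;> simp [hp, mul_ite]

lemma PMF.sum_univ {X : Type} [Fintype X] (p : PMF X) : ∑ x, p x = 1 := by
  rw [← tsum_fintype (L := SummationFilter.unconditional _)]; exact p.tsum_coe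

lemma horizonProb_true (M : POMDP L A O) [Fintype L] [Fintype A]
    (α : Strategy L A) (l : L) (n : ℕ) :
    M.horizonProb α l n (fun _ => True) = 1 := by
  induction n generalizing α l with
  | zero => simp [horizonProb_zero]
  | succ n ih =>
    rw [horizonProb_succ]
    simp only [ih]
    rw [Fintype.sum_prod_type]
    have : ∀ a : A, ∑ l₀ : L, α l [] a * M.δ l a l₀ * 1 = α l [] a := by
      intro a
      simp only [mul_one, ← Finset.mul_sum]
      rw [PMF.sum_univ (M.δ l a), mul_one]
    simp only [this]
    exact PMF.sum_univ (α l [])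

open Classical in
lemma horizonProb_mono_pred (M : POMDP L A O) [Fintype L] [Fintype A]
    (α : Strategy L A) (l : L) (n : ℕ) {P Q : List (A × L) → Prop}
    (hPQ : ∀ h, P h → Q h) :
    M.horizonProb α l n P ≤ M.horizonProb α l n Q := by
  rw [horizonProb_eq, horizonProb_eq]
  refine Finset.sum_le_sum fun f _ => ?_
  by_cases hp : P (List.ofFn f)
  · rw [if_pos hp, if_pos (hPQ _ hp)]
  · simp [hp]

lemma horizonProb_le_one (M : POMDP L A O) [Fintype L] [Fintype A]
    (α : Strategy L A) (l : L) (n : ℕ) (P : List (A × L) → Prop) :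
    M.horizonProb α l n P ≤ 1 :=
  (horizonProb_mono_pred M α l n (fun _ _ => trivial)).trans_eq
    (horizonProb_true M α l n)

lemma horizonProb_congr (M : POMDP L A O) [Fintype L] [Fintype A]
    (α : Strategy L A) (l : L) (n : ℕ) {P Q : List (A × L) → Prop}
    (hPQ : ∀ h, P h ↔ Q h) :
    M.horizonProb α l n P = M.horizonProb α l n Q :=
  le_antisymm (horizonProb_mono_pred M α l n fun h => (hPQ h).1)
    (horizonProb_mono_pred M α l n fun h => (hPQ h).2)

lemma horizonProb_false (M : POMDP L A O) [Fintype L] [Fintype A]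
    (α : Strategy L A) (l : L) (n : ℕ) {P : List (A × L) → Prop}
    (hP : ∀ h, ¬ P h) : M.horizonProb α l n P = 0 := by
  rw [horizonProb_eq]
  exact Finset.sum_eq_zero fun f _ => if_neg (hP _)

end POMDPProof
namespace POMDPProof

open POMDP

variable {L A O : Type}

/-- The safety predicate on prefixes. -/
def SafeP (T : Set L) (l : L) (h : List (A × L)) : Prop :=
  ∀ s ∈ POMDP.statesOf l h, s ∈ T

lemma safeProb_def (M : POMDP L A O) [Fintype L] [Fintype A]
    (α : Strategy L A) (l : L) (T : Set L) :
    M.safeProb α l T = ⨅ n, M.horizonProb α l n (SafeP T l) := rfl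

lemma SafeP_nil {T : Set L} {l : L} : SafeP T l ([] : List (A × L)) ↔ l ∈ T := by
  simp [SafeP, POMDP.statesOf]

lemma SafeP_cons {T : Set L} {l l₀ : L} {a : A} {h : List (A × L)} :
    SafeP T l ((a, l₀) :: h) ↔ l ∈ T ∧ SafeP T l₀ h := by
  unfold SafeP
  rw [statesOf_cons]
  simp [List.forall_mem_cons]

lemma SafeP_mem {T : Set L} {l : L} {h : List (A × L)} (hs : SafeP T l h) : l ∈ T :=
  hs l (by simp [POMDP.statesOf])

lemma horizonProb_shift_nil (M : POMDP L A O) [Fintype L] [Fintype A]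
    (α : Strategy L A) (l : L) (n : ℕ) (P : List (A × L) → Prop) :
    M.horizonProb (shift α l []) l n P = M.horizonProb α l n P := rfl

open Classical in
lemma horizon_split (M : POMDP L A O) [Fintype L] [Fintype A] (T : Set L)
    (n m : ℕ) : ∀ (α : Strategy L A) (l : L),
    M.horizonProb α l (n + m) (SafeP T l) =
      ∑ f : Fin n → A × L,
        if SafeP T l (List.ofFn f) then
          M.prefProb α l (List.ofFn f) *
            M.horizonProb (shift α l (List.ofFn f)) (lastSt l (List.ofFn f)) m
              (SafeP T (lastSt l (List.ofFn f)))
        else 0 := by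
  induction n with
  | zero =>
    intro α l
    rw [Nat.zero_add, Fintype.sum_unique]
    have h0 : List.ofFn (default : Fin 0 → A × L) = [] := by simp
    rw [h0]
    by_cases hl : l ∈ T
    · rw [if_pos (SafeP_nil.mpr hl), prefProb_nil, one_mul, lastSt_nil,
        horizonProb_shift_nil]
    · rw [if_neg (fun hs => hl (SafeP_nil.mp hs))]
      exact horizonProb_false M α l m (fun h hs => hl (SafeP_mem hs))
  | succ n ih =>
    intro α l
    rw [Nat.succ_add, horizonProb_succ]
    conv_rhs => rw [← (Fin.consEquiv (fun _ : Fin (n+1) => A × L)).sum_comp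
        (fun f => if SafeP T l (List.ofFn f) then
          M.prefProb α l (List.ofFn f) *
            M.horizonProb (shift α l (List.ofFn f)) (lastSt l (List.ofFn f)) m
              (SafeP T (lastSt l (List.ofFn f))) else 0),
      Fintype.sum_prod_type]
    refine Finset.sum_congr rfl fun p _ => ?_
    obtain ⟨a, l₀⟩ := p
    by_cases hl : l ∈ T
    · have hcong : M.horizonProb (shift α l [(a, l₀)]) l₀ (n + m)
          (fun h => SafeP T l ((a, l₀) :: h)) =
          M.horizonProb (shift α l [(a, l₀)]) l₀ (n + m) (SafeP T l₀) :=
        horizonProb_congr M _ _ _ (fun h => by simp [SafeP_cons, hl])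
      rw [hcong, ih]
      rw [Finset.mul_sum]
      refine Finset.sum_congr rfl fun g _ => ?_
      have hofn : List.ofFn (Fin.consEquiv (fun _ : Fin (n+1) => A × L) ((a, l₀), g)) =
          (a, l₀) :: List.ofFn g := ofFn_cons (a, l₀) g
      rw [hofn]
      have hsh : shift (shift α l [(a, l₀)]) l₀ (List.ofFn g) =
          shift α l ((a, l₀) :: List.ofFn g) := shift_shift α l l₀ [(a, l₀)] (List.ofFn g)
      rw [hsh, lastSt_cons, prefProb_cons]
      by_cases hg : SafeP T l₀ (List.ofFn g)
      · rw [if_pos hg, if_pos (SafeP_cons.mpr ⟨hl, hg⟩)]; ring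
      · rw [if_neg hg, if_neg (fun hs => hg (SafeP_cons.mp hs).2), mul_zero]
    · have h1 : M.horizonProb (shift α l [(a, l₀)]) l₀ (n + m)
          (fun h => SafeP T l ((a, l₀) :: h)) = 0 :=
        horizonProb_false M _ _ _ (fun h hs => hl (SafeP_cons.mp hs).1)
      rw [h1, mul_zero]
      symm
      refine Finset.sum_eq_zero fun g _ => ?_
      have hofn : List.ofFn (Fin.consEquiv (fun _ : Fin (n+1) => A × L) ((a, l₀), g)) =
          (a, l₀) :: List.ofFn g := ofFn_cons (a, l₀) g
      rw [hofn, if_neg (fun hs => hl (SafeP_cons.mp hs).1)]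

lemma horizon_safe_antitone (M : POMDP L A O) [Fintype L] [Fintype A] (T : Set L)
    (n : ℕ) : ∀ (α : Strategy L A) (l : L),
    M.horizonProb α l (n + 1) (SafeP T l) ≤ M.horizonProb α l n (SafeP T l) := by
  induction n with
  | zero =>
    intro α l
    rw [horizonProb_zero]
    by_cases hl : l ∈ T
    · rw [if_pos (SafeP_nil.mpr hl)]; exact horizonProb_le_one M α l 1 _
    · rw [if_neg (fun hs => hl (SafeP_nil.mp hs))]
      exact le_of_eq (horizonProb_false M α l 1 (fun h hs => hl (SafeP_mem hs)))
  | succ n ih =>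
    intro α l
    rw [horizonProb_succ, horizonProb_succ]
    refine Finset.sum_le_sum fun p _ => ?_
    obtain ⟨a, l₀⟩ := p
    refine mul_le_mul_right ?_ _
    by_cases hl : l ∈ T
    · have hc : ∀ k, M.horizonProb (shift α l [(a, l₀)]) l₀ k
          (fun h => SafeP T l ((a, l₀) :: h)) =
          M.horizonProb (shift α l [(a, l₀)]) l₀ k (SafeP T l₀) := fun k =>
        horizonProb_congr M _ _ _ (fun h => by simp [SafeP_cons, hl])
      rw [hc, hc]
      exact ih _ _
    · rw [horizonProb_false M _ _ _ (fun h hs => hl (SafeP_cons.mp hs).1),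
        horizonProb_false M _ _ _ (fun h hs => hl (SafeP_cons.mp hs).1)]

lemma horizon_safe_anti (M : POMDP L A O) [Fintype L] [Fintype A] (T : Set L)
    (α : Strategy L A) (l : L) :
    Antitone (fun n => M.horizonProb α l n (SafeP T l)) :=
  antitone_nat_of_succ_le (fun n => horizon_safe_antitone M T n α l)

lemma tendsto_horizon_safe (M : POMDP L A O) [Fintype L] [Fintype A] (T : Set L)
    (α : Strategy L A) (l : L) :
    Filter.Tendsto (fun n => M.horizonProb α l n (SafeP T l)) Filter.atTop
      (nhds (M.safeProb α l T)) := by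
  rw [safeProb_def]
  exact tendsto_atTop_iInf (horizon_safe_anti M T α l)

lemma safeProb_le_one (M : POMDP L A O) [Fintype L] [Fintype A]
    (α : Strategy L A) (l : L) (T : Set L) : M.safeProb α l T ≤ 1 :=
  (iInf_le _ 0).trans (horizonProb_le_one M α l 0 _)

open Classical in
/-- Decomposition of the safety probability at horizon `n`. -/
lemma safeProb_split (M : POMDP L A O) [Fintype L] [Fintype A] (T : Set L)
    (α : Strategy L A) (l : L) (n : ℕ) :
    M.safeProb α l T =
      ∑ f : Fin n → A × L,
        if SafeP T l (List.ofFn f) then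
          M.prefProb α l (List.ofFn f) *
            M.safeProb (shift α l (List.ofFn f)) (lastSt l (List.ofFn f)) T
        else 0 := by
  have h1 : Filter.Tendsto (fun m => M.horizonProb α l (n + m) (SafeP T l))
      Filter.atTop (nhds (M.safeProb α l T)) := by
    have := (tendsto_horizon_safe M T α l).comp (Filter.tendsto_add_atTop_nat n)
    simpa [Function.comp_def, Nat.add_comm] using this
  have h2 : Filter.Tendsto (fun m => M.horizonProb α l (n + m) (SafeP T l))
      Filter.atTop (nhds (∑ f : Fin n → A × L,
        if SafeP T l (List.ofFn f) then
          M.prefProb α l (List.ofFn f) *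
            M.safeProb (shift α l (List.ofFn f)) (lastSt l (List.ofFn f)) T
        else 0)) := by
    simp only [horizon_split M T n]
    refine tendsto_finset_sum _ fun f _ => ?_
    by_cases hf : SafeP T l (List.ofFn f)
    · simp only [if_pos hf]
      exact ENNReal.Tendsto.const_mul
        (tendsto_horizon_safe M T (shift α l (List.ofFn f)) (lastSt l (List.ofFn f)))
        (Or.inr (prefProb_ne_top M α l (List.ofFn f)))
    · simp only [if_neg hf]
      exact tendsto_const_nhds
  exact tendsto_nhds_unique h1 h2

end POMDPProof
namespace POMDPProof

open POMDP

variable {L A O : Type}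

open Classical in
/-- Key conditioning lemma: if safety has positive probability, then for every
`c < 1` there is a consistent safe prefix after which the conditional safety
probability exceeds `c`. -/
lemma exists_good_prefix (M : POMDP L A O) [Fintype L] [Fintype A] (T : Set L)
    (α : Strategy L A) (l : L) (hpos : 0 < M.safeProb α l T)
    {c : ℝ≥0∞} (hc : c < 1) :
    ∃ h : List (A × L), SafeP T l h ∧ 0 < M.prefProb α l h ∧
      c < M.safeProb (shift α l h) (lastSt l h) T := by
  by_contra hcon
  push_neg at hcon
  have hbound : ∀ n : ℕ, M.safeProb α l T ≤ M.horizonProb α l n (SafeP T l) * c := by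
    intro n
    rw [safeProb_split M T α l n, horizonProb_eq, Finset.sum_mul]
    refine Finset.sum_le_sum fun f _ => ?_
    by_cases hf : SafeP T l (List.ofFn f)
    · rw [if_pos hf, if_pos hf]
      rcases eq_or_lt_of_le (zero_le : 0 ≤ M.prefProb α l (List.ofFn f)) with h0 | h0
      · rw [← h0, zero_mul, zero_mul]
      · exact mul_le_mul_right (hcon (List.ofFn f) hf h0) _
    · rw [if_neg hf, if_neg hf, zero_mul]
  have hlim : Filter.Tendsto (fun n => M.horizonProb α l n (SafeP T l) * c)
      Filter.atTop (nhds (M.safeProb α l T * c)) :=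
    ENNReal.Tendsto.mul_const (tendsto_horizon_safe M T α l)
      (Or.inr (hc.trans_le le_top).ne)
  have hle : M.safeProb α l T ≤ M.safeProb α l T * c :=
    ge_of_tendsto hlim (Filter.Eventually.of_forall hbound)
  have hlt : M.safeProb α l T * c < M.safeProb α l T * 1 := by
    exact ENNReal.mul_lt_mul_right hpos.ne'
      (fun ht => by simpa [ht] using safeProb_le_one M α l T) hc
  rw [mul_one] at hlt
  exact absurd (hle.trans_lt hlt) (lt_irrefl _)

open Classical in
lemma le_horizonProb_single (M : POMDP L A O) [Fintype L] [Fintype A]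
    (α : Strategy L A) (l : L) {n : ℕ} (P : List (A × L) → Prop)
    (f : Fin n → A × L) (hP : P (List.ofFn f)) :
    M.prefProb α l (List.ofFn f) ≤ M.horizonProb α l n P := by
  rw [horizonProb_eq]
  have := Finset.single_le_sum (f := fun g : Fin n → A × L =>
      if P (List.ofFn g) then M.prefProb α l (List.ofFn g) else 0)
    (fun g _ => zero_le) (Finset.mem_univ f)
  simp only [if_pos hP] at this
  exact this

/-- A consistent safe prefix ending at `s` witnesses positive `Until(T, {s})`. -/
lemma until_pos_of_prefix (M : POMDP L A O) [Fintype L] [Fintype A] (T : Set L)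
    (α : Strategy L A) (l : L) (h : List (A × L)) (hsafe : SafeP T l h)
    (hcons : 0 < M.prefProb α l h) :
    0 < M.untilProb α l T {lastSt l h} := by
  set P : List (A × L) → Prop := fun h' => ∃ k, ∃ hk : k < (POMDP.statesOf l h').length,
      (POMDP.statesOf l h').get ⟨k, hk⟩ ∈ ({lastSt l h} : Set L) ∧
      ∀ j, ∀ hj : j < (POMDP.statesOf l h').length, j ≤ k →
        (POMDP.statesOf l h').get ⟨j, hj⟩ ∈ T with hP
  have hlen : (POMDP.statesOf l h).length = h.length + 1 := by
    simp [POMDP.statesOf]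
  have hPh : P h := by
    refine ⟨h.length, by rw [hlen]; exact Nat.lt_succ_self _, ?_, ?_⟩
    · have : (POMDP.statesOf l h).get ⟨h.length, by rw [hlen]; exact Nat.lt_succ_self _⟩ =
          lastSt l h := by
        unfold lastSt
        unfold POMDP.statesOf
        rw [List.getLast_eq_getElem]
        simp
      rw [this]; rfl
    · intro j hj _
      exact hsafe _ (List.get_mem _ _)
  have hof : List.ofFn (h.get) = h := List.ofFn_get h
  have h1 : M.prefProb α l h ≤ M.horizonProb α l h.length P := by
    have := le_horizonProb_single M α l P h.get (by rw [hof]; exact hPh)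
    rwa [hof] at this
  have h2 : M.horizonProb α l h.length P ≤ M.untilProb α l T {lastSt l h} :=
    le_iSup (fun n => M.horizonProb α l n P) h.length
  exact lt_of_lt_of_le hcons (h1.trans h2)

end POMDPProof
namespace POMDPProof

open POMDP

variable {L A O : Type}

/-- A "raw" (clamped) version of `prefProbAux` defined on arbitrary functions. -/
noncomputable def rawAux (M : POMDP L A O) :
    (List (A × L) → A → ℝ≥0∞) → L → List (A × L) → ℝ≥0∞
  | _, _, [] => 1
  | y, l, (a, l') :: h =>
      min (y [] a) 1 * M.δ l a l' * rawAux M (fun h' => y ((a, l') :: h')) l' h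

lemma rawAux_eq_prefProbAux (M : POMDP L A O) :
    ∀ (h : List (A × L)) (π : List (A × L) → PMF A) (l : L),
    rawAux M (fun h' a => π h' a) l h = M.prefProbAux π l h := by
  intro h
  induction h with
  | nil => intro π l; rfl
  | cons p h ih =>
    intro π l
    obtain ⟨a, l'⟩ := p
    show min (π [] a) 1 * M.δ l a l' * _ = _
    rw [min_eq_left (PMF.coe_le_one _ _)]
    unfold POMDP.prefProbAux
    rw [ih (fun h' => π ((a, l') :: h')) l']

lemma rawAux_le_one (M : POMDP L A O) :
    ∀ (h : List (A × L)) (y : List (A × L) → A → ℝ≥0∞) (l : L),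
    rawAux M y l h ≤ 1 := by
  intro h
  induction h with
  | nil => intro y l; exact le_rfl
  | cons p h ih =>
    intro y l
    obtain ⟨a, l'⟩ := p
    show min (y [] a) 1 * M.δ l a l' * _ ≤ 1
    exact mul_le_one' (mul_le_one' (min_le_right _ _) (PMF.coe_le_one _ _)) (ih _ _)

lemma rawAux_ne_top (M : POMDP L A O) (h : List (A × L))
    (y : List (A × L) → A → ℝ≥0∞) (l : L) : rawAux M y l h ≠ ⊤ :=
  fun ht => by simpa [ht] using rawAux_le_one M h y l

open Classical in
/-- A raw version of `horizonProb`. -/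
noncomputable def rawH (M : POMDP L A O) [Fintype L] [Fintype A]
    (y : L → List (A × L) → A → ℝ≥0∞) (l : L) (n : ℕ)
    (P : List (A × L) → Prop) : ℝ≥0∞ :=
  ∑ f : Fin n → A × L,
    if P (List.ofFn f) then rawAux M (y l) l (List.ofFn f) else 0

lemma rawH_eq_horizon (M : POMDP L A O) [Fintype L] [Fintype A]
    (β : Strategy L A) (l : L) (n : ℕ) (P : List (A × L) → Prop) :
    rawH M (fun l h a => β l h a) l n P = M.horizonProb β l n P := by
  rw [horizonProb_eq, rawH]
  refine Finset.sum_congr rfl fun f _ => ?_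
  rw [rawAux_eq_prefProbAux M (List.ofFn f) (β l) l]
  rfl

lemma cont_mul {X : Type*} [TopologicalSpace X] {f g : X → ℝ≥0∞}
    (hf : Continuous f) (hg : Continuous g)
    (hf1 : ∀ x, f x ≠ ⊤) (hg1 : ∀ x, g x ≠ ⊤) :
    Continuous fun x => f x * g x := by
  rw [continuous_iff_continuousAt]
  intro x
  exact ENNReal.Tendsto.mul hf.continuousAt (Or.inr (hg1 x)) hg.continuousAt
    (Or.inr (hf1 x))

lemma continuous_rawAux (M : POMDP L A O) {X : Type*} [TopologicalSpace X] :
    ∀ (h : List (A × L)) (l : L) (g : X → List (A × L) → A → ℝ≥0∞)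
      (hg : ∀ h' a, Continuous fun y => g y h' a),
    Continuous fun y => rawAux M (g y) l h := by
  intro h
  induction h with
  | nil => intro l g _hg; simp only [rawAux]; exact continuous_const
  | cons p h ih =>
    intro l g hg
    obtain ⟨a, l'⟩ := p
    simp only [rawAux]
    have h1 : Continuous fun y => min (g y [] a) 1 * M.δ l a l' :=
      cont_mul ((hg [] a).min continuous_const) continuous_const
        (fun y => (ne_top_of_le_ne_top ENNReal.one_ne_top (min_le_right _ _)))
        (fun _ => ne_top_of_le_ne_top ENNReal.one_ne_top (PMF.coe_le_one _ _))
    have h2 : Continuous fun y => rawAux M (fun h' => g y ((a, l') :: h')) l' h :=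
      ih l' (fun y h' => g y ((a, l') :: h')) (fun h' a' => hg _ _)
    exact cont_mul h1 h2
      (fun y => ENNReal.mul_ne_top
        (ne_top_of_le_ne_top ENNReal.one_ne_top (min_le_right _ _))
        (ne_top_of_le_ne_top ENNReal.one_ne_top (PMF.coe_le_one _ _)))
      (fun y => rawAux_ne_top M _ _ _)

lemma continuous_rawH (M : POMDP L A O) [Fintype L] [Fintype A]
    (l : L) (n : ℕ) (P : List (A × L) → Prop) :
    Continuous fun y : L → List (A × L) → A → ℝ≥0∞ => rawH M y l n P := by
  unfold rawH
  refine continuous_finset_sum _ fun f _ => ?_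
  by_cases hP : P (List.ofFn f)
  · simp only [if_pos hP]
    exact continuous_rawAux M (List.ofFn f) l (fun y : L → List (A × L) → A → ℝ≥0∞ => y l)
      (fun h' a => (continuous_apply a).comp
        ((continuous_apply h').comp (continuous_apply l)))
  · simp only [if_neg hP]
    exact continuous_const

/-- Attainment of the value 1 for safety, by compactness of the strategy space. -/
lemma exists_safe_one (M : POMDP L A O) [Fintype L] [Fintype A] (T : Set L) (s : L)
    (hv : ∀ k : ℕ, ∃ β : Strategy L A, M.ObservationBased β ∧
      1 - ((k : ℝ≥0∞) + 1)⁻¹ < M.safeProb β s T) :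
    ∃ β : Strategy L A, M.ObservationBased β ∧ M.safeProb β s T = 1 := by
  classical
  set Y := L → List (A × L) → A → ℝ≥0∞ with hY
  set C : ℕ → Set Y := fun k =>
    {y | (∀ l h, ∑ a, y l h a = 1) ∧
      (∀ l₁ l₂ (h₁ h₂ : List (A × L)), M.obs l₁ = M.obs l₂ →
        h₁.map Prod.fst = h₂.map Prod.fst →
        h₁.map (fun p => M.obs p.2) = h₂.map (fun p => M.obs p.2) →
        y l₁ h₁ = y l₂ h₂) ∧
      1 - ((k : ℝ≥0∞) + 1)⁻¹ ≤ ⨅ n, rawH M y s n (SafeP T s)} with hC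
  have hclosed : ∀ k, IsClosed (C k) := by
    intro k
    rw [hC]
    simp only [Set.setOf_and]
    refine IsClosed.inter ?_ (IsClosed.inter ?_ ?_)
    · rw [Set.setOf_forall]
      refine isClosed_iInter fun l => ?_
      rw [Set.setOf_forall]
      refine isClosed_iInter fun h => ?_
      refine isClosed_eq (continuous_finset_sum _ fun a _ => ?_) continuous_const
      exact (continuous_apply a).comp ((continuous_apply h).comp (continuous_apply l))
    · rw [Set.setOf_forall]
      refine isClosed_iInter fun l₁ => ?_
      rw [Set.setOf_forall]
      refine isClosed_iInter fun l₂ => ?_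
      rw [Set.setOf_forall]
      refine isClosed_iInter fun h₁ => ?_
      rw [Set.setOf_forall]
      refine isClosed_iInter fun h₂ => ?_
      rw [Set.setOf_forall]
      refine isClosed_iInter fun _ => ?_
      rw [Set.setOf_forall]
      refine isClosed_iInter fun _ => ?_
      rw [Set.setOf_forall]
      refine isClosed_iInter fun _ => ?_
      refine isClosed_eq ?_ ?_
      · exact (continuous_apply h₁).comp (continuous_apply l₁)
      · exact (continuous_apply h₂).comp (continuous_apply l₂)
    · have : {y : Y | 1 - ((k : ℝ≥0∞) + 1)⁻¹ ≤ ⨅ n, rawH M y s n (SafeP T s)} =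
          ⋂ n, {y : Y | 1 - ((k : ℝ≥0∞) + 1)⁻¹ ≤ rawH M y s n (SafeP T s)} := by
        ext y
        simp [le_iInf_iff]
      rw [this]
      exact isClosed_iInter fun n =>
        isClosed_le continuous_const (continuous_rawH M s n (SafeP T s))
  have hne : ∀ k, (C k).Nonempty := by
    intro k
    obtain ⟨β, hβobs, hβ⟩ := hv k
    refine ⟨fun l h a => β l h a, ?_, ?_, ?_⟩
    · intro l h; exact PMF.sum_univ (β l h)
    · intro l₁ l₂ h₁ h₂ ho ha hb
      have h := hβobs l₁ l₂ h₁ h₂ ho ha hb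
      funext a
      show (β l₁ h₁) a = (β l₂ h₂) a
      rw [h]
    · have heq : (⨅ n, rawH M (fun l h a => β l h a) s n (SafeP T s)) =
          M.safeProb β s T := by
        rw [safeProb_def]
        exact iInf_congr fun n => rawH_eq_horizon M β s n (SafeP T s)
      rw [heq]
      exact le_of_lt hβ
  have hsub : ∀ k, C (k + 1) ⊆ C k := by
    intro k y hy
    refine ⟨hy.1, hy.2.1, le_trans ?_ hy.2.2⟩
    refine tsub_le_tsub_left ?_ _
    refine ENNReal.inv_le_inv.mpr ?_
    push_cast
    gcongr
    · norm_num
  have hinter : (⋂ k, C k).Nonempty :=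
    IsCompact.nonempty_iInter_of_sequence_nonempty_isCompact_isClosed C hsub hne
      ((hclosed 0).isCompact) hclosed
  obtain ⟨y, hy⟩ := hinter
  have hy' : ∀ k, y ∈ C k := Set.mem_iInter.mp hy
  have hy1 : ∀ l h, ∑ a, y l h a = 1 := (hy' 0).1
  set β : Strategy L A := fun l h => ⟨y l h, (hy1 l h) ▸ hasSum_fintype (y l h)⟩ with hβ
  have hcoe : (fun l h a => β l h a) = y := rfl
  have hobsβ : M.ObservationBased β := by
    intro l₁ l₂ h₁ h₂ ho ha hb
    exact Subtype.ext ((hy' 0).2.1 l₁ l₂ h₁ h₂ ho ha hb)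
  have hsafe : M.safeProb β s T = ⨅ n, rawH M y s n (SafeP T s) := by
    rw [safeProb_def]
    refine (iInf_congr fun n => ?_).symm
    rw [← hcoe]
    exact rawH_eq_horizon M β s n (SafeP T s)
  refine ⟨β, hobsβ, ?_⟩
  set x := M.safeProb β s T with hx
  have hxle : x ≤ 1 := safeProb_le_one M β s T
  have hge : ∀ k : ℕ, 1 - ((k : ℝ≥0∞) + 1)⁻¹ ≤ x := by
    intro k
    exact le_trans (hy' k).2.2 hsafe.ge
  refine le_antisymm hxle ?_
  by_contra hlt
  have hxlt : x < 1 := lt_of_not_ge hlt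
  have h1x : (1 : ℝ≥0∞) - x ≠ 0 := by
    rw [← pos_iff_ne_zero]
    exact tsub_pos_of_lt hxlt
  obtain ⟨n, hn⟩ := ENNReal.exists_inv_nat_lt h1x
  have hn0 : n ≠ 0 := by
    intro h0
    rw [h0] at hn
    simp only [Nat.cast_zero, ENNReal.inv_zero] at hn
    exact absurd (hn.trans_le tsub_le_self) (not_lt.mpr le_top)
  set k := n - 1 with hk
  have hnk : ((k : ℝ≥0∞) + 1) = (n : ℝ≥0∞) := by
    rw [hk]
    norm_cast
    omega
  have hkn : ((k : ℝ≥0∞) + 1)⁻¹ < 1 - x := by rw [hnk]; exact hn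
  have h1 : (1 : ℝ≥0∞) ≤ x + ((k : ℝ≥0∞) + 1)⁻¹ := tsub_le_iff_right.mp (hge k)
  have h2 : x + ((k : ℝ≥0∞) + 1)⁻¹ < x + (1 - x) :=
    ENNReal.add_lt_add_left (fun ht => by simp [ht] at hxle) hkn
  rw [add_tsub_cancel_of_le hxle] at h2
  exact absurd (h1.trans_lt h2) (lt_irrefl 1)

end POMDPProof
/-- If Player 1 has an observation-based strategy that is positive
winning for `Safe(T)` from `l`, then there is a state `l'` such that Player 1
has an observation-based strategy positive winning for `Until(T, {l'})` from `l`,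
and an observation-based strategy almost-sure winning for `Safe(T)` from `l'`. -/
theorem positive_safe_implies_until_and_almost_safe {L A O : Type}
    [Fintype L] [Fintype A] (M : POMDP L A O) (T : Set L) (l : L)
    (hpos : ∃ α : POMDP.Strategy L A, M.ObservationBased α ∧ 0 < M.safeProb α l T) :
    ∃ l' : L,
      (∃ α : POMDP.Strategy L A, M.ObservationBased α ∧ 0 < M.untilProb α l T {l'}) ∧
      (∃ α : POMDP.Strategy L A, M.ObservationBased α ∧ M.safeProb α l' T = 1) := by
  classical
  open POMDPProof in
  obtain ⟨α, hobs, hpos⟩ := hpos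
  set v : L → ℝ≥0∞ := fun s =>
    ⨆ β : {β : POMDP.Strategy L A // M.ObservationBased β}, M.safeProb β.1 s T with hv
  set F : Finset L := Finset.univ.filter (fun s => ∃ h : List (A × L),
    POMDPProof.SafeP T l h ∧ 0 < M.prefProb α l h ∧ POMDPProof.lastSt l h = s) with hF
  have hclaim : ∀ c : ℝ≥0∞, c < 1 → ∃ s ∈ F, c < v s := by
    intro c hc
    obtain ⟨h, hsafe, hcons, hlt⟩ := POMDPProof.exists_good_prefix M T α l hpos hc
    refine ⟨POMDPProof.lastSt l h, ?_, ?_⟩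
    · rw [hF]
      exact Finset.mem_filter.mpr ⟨Finset.mem_univ _, ⟨h, hsafe, hcons, rfl⟩⟩
    · exact lt_of_lt_of_le hlt (le_iSup
        (fun β : {β : POMDP.Strategy L A // M.ObservationBased β} =>
          M.safeProb β.1 (POMDPProof.lastSt l h) T)
        ⟨POMDPProof.shift α l h, POMDPProof.shift_obs M hobs l h⟩)
  obtain ⟨s0, hs0, -⟩ := hclaim 0 zero_lt_one
  have hFne : F.Nonempty := ⟨s0, hs0⟩
  obtain ⟨s, hsF, hseq⟩ := Finset.exists_mem_eq_sup F hFne v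
  have hsup1 : (1 : ℝ≥0∞) ≤ F.sup v := by
    by_contra hcon
    obtain ⟨t, htF, htv⟩ := hclaim (F.sup v) (lt_of_not_ge hcon)
    exact absurd (htv.trans_le (Finset.le_sup htF)) (lt_irrefl _)
  have hvs : (1 : ℝ≥0∞) ≤ v s := hseq ▸ hsup1
  have hk : ∀ k : ℕ, ∃ β : POMDP.Strategy L A, M.ObservationBased β ∧
      1 - ((k : ℝ≥0∞) + 1)⁻¹ < M.safeProb β s T := by
    intro k
    have hlt : 1 - ((k : ℝ≥0∞) + 1)⁻¹ < v s :=
      lt_of_lt_of_le (ENNReal.sub_lt_self ENNReal.one_ne_top one_ne_zero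
        (ENNReal.inv_ne_zero.mpr (by simp))) hvs
    rw [hv, lt_iSup_iff] at hlt
    obtain ⟨⟨β, hβ⟩, hβlt⟩ := hlt
    exact ⟨β, hβ, hβlt⟩
  obtain ⟨β, hβobs, hβ1⟩ := POMDPProof.exists_safe_one M T s hk
  have hsmem := Finset.mem_filter.mp hsF
  obtain ⟨h, hhsafe, hhcons, hhlast⟩ := hsmem.2
  have huntil : 0 < M.untilProb α l T {s} := by
    rw [← hhlast]
    exact POMDPProof.until_pos_of_prefix M T α l h hhsafe hhcons
  exact ⟨s, ⟨α, hobs, huntil⟩, ⟨β, hβobs, hβ1⟩⟩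
end

section
/- Let G = (L, Σ, δ, O) be a POMDP, T ⊆ L, and l ∈ L. Player 1 has an observation-based strategy that is positive winning for Safe(T) from l if and only if there exists a state l' ∈ L such that Player 1 has an observation-based strategy that is positive winning for Until(T, {l'}) from l and an observation-based strategy that is almost-sure winning for Safe(T) from l'. -/
open scoped ENNReal

namespace PSafe

open POMDP Classical

variable {L A O : Type} [Fintype L] [Fintype A]

noncomputable local instance (priority := high) : ∀ p : Prop, Decidable p := fun _ => Classical.propDecidable _

/-- Shift a history-strategy by one step. -/
def shift (π : List (A × L) → PMF A) (a : A) (u : L) : List (A × L) → PMF A :=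
  fun h => π ((a, u) :: h)

/-- Shift a history-strategy by a finite prefix. -/
def shiftL (π : List (A × L) → PMF A) (w : List (A × L)) : List (A × L) → PMF A :=
  fun h => π (w ++ h)

/-- End state of a finite prefix. -/
def endSt : L → List (A × L) → L
  | t, [] => t
  | _, (_, u) :: h => endSt u h

/-- Safety indicator of a prefix. -/
noncomputable def sind (T : Set L) (t : L) (h : List (A × L)) : ℝ≥0∞ :=
  if ∀ s ∈ POMDP.statesOf t h, s ∈ T then 1 else 0

/-- Finite-horizon safety probability, recursively. -/
noncomputable def hsafe (M : POMDP L A O) (T : Set L) :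
    (List (A × L) → PMF A) → L → ℕ → ℝ≥0∞
  | _, t, 0 => if t ∈ T then 1 else 0
  | π, t, n + 1 =>
      if t ∈ T then
        ∑ x : A × L, π [] x.1 * M.δ t x.1 x.2 * hsafe M T (shift π x.1 x.2) x.2 n
      else 0

/-- Finite-horizon unsafety probability, recursively. -/
noncomputable def hunsafe (M : POMDP L A O) (T : Set L) :
    (List (A × L) → PMF A) → L → ℕ → ℝ≥0∞
  | _, t, 0 => if t ∈ T then 0 else 1
  | π, t, n + 1 =>
      if t ∈ T then
        ∑ x : A × L, π [] x.1 * M.δ t x.1 x.2 * hunsafe M T (shift π x.1 x.2) x.2 n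
      else 1

lemma pmf_sum_eq_one (p : PMF A) : ∑ a : A, p a = 1 := by
  have := p.tsum_coe
  rwa [tsum_fintype] at this

lemma pmfL_sum_eq_one (p : PMF L) : ∑ a : L, p a = 1 := by
  have := p.tsum_coe
  rwa [tsum_fintype] at this

lemma sum_one (M : POMDP L A O) (π : List (A × L) → PMF A) (t : L) :
    ∑ x : A × L, π [] x.1 * M.δ t x.1 x.2 = 1 := by
  rw [Fintype.sum_prod_type]
  have : ∀ a : A, ∑ u : L, π [] a * M.δ t a u = π [] a := by
    intro a
    rw [← Finset.mul_sum, pmfL_sum_eq_one, mul_one]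
  simp_rw [this]
  exact pmf_sum_eq_one _

lemma hsafe_le_one (M : POMDP L A O) (T : Set L) :
    ∀ (n : ℕ) (π) (t : L), hsafe M T π t n ≤ 1 := by
  intro n
  induction n with
  | zero => intro π t; rw [hsafe]; split <;> simp
  | succ n ih =>
    intro π t
    rw [hsafe]
    split
    · calc ∑ x : A × L, π [] x.1 * M.δ t x.1 x.2 * hsafe M T (shift π x.1 x.2) x.2 n
          ≤ ∑ x : A × L, π [] x.1 * M.δ t x.1 x.2 := by
            apply Finset.sum_le_sum
            intro x _
            exact mul_le_of_le_one_right' (ih _ _)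
      _ = 1 := sum_one M π t
    · exact zero_le_one

lemma hsafe_notmem (M : POMDP L A O) (T : Set L) (π) {t : L} (ht : t ∉ T) (n : ℕ) :
    hsafe M T π t n = 0 := by
  cases n <;> rw [hsafe] <;> exact if_neg ht

lemma hunsafe_notmem (M : POMDP L A O) (T : Set L) (π) {t : L} (ht : t ∉ T) (n : ℕ) :
    hunsafe M T π t n = 1 := by
  cases n <;> rw [hunsafe] <;> exact if_neg ht

lemma hsafe_add_hunsafe (M : POMDP L A O) (T : Set L) :
    ∀ (n : ℕ) (π) (t : L), hsafe M T π t n + hunsafe M T π t n = 1 := by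
  intro n
  induction n with
  | zero => intro π t; rw [hsafe, hunsafe]; split <;> simp
  | succ n ih =>
    intro π t
    rw [hsafe, hunsafe]
    split
    · rw [← Finset.sum_add_distrib]
      calc ∑ x : A × L, (π [] x.1 * M.δ t x.1 x.2 * hsafe M T (shift π x.1 x.2) x.2 n
            + π [] x.1 * M.δ t x.1 x.2 * hunsafe M T (shift π x.1 x.2) x.2 n)
          = ∑ x : A × L, π [] x.1 * M.δ t x.1 x.2 := by
            apply Finset.sum_congr rfl
            intro x _
            rw [← mul_add, ih, mul_one]
        _ = 1 := sum_one M π t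
    · simp

lemma hunsafe_mono (M : POMDP L A O) (T : Set L) :
    ∀ (n : ℕ) (π) (t : L), hunsafe M T π t n ≤ hunsafe M T π t (n + 1) := by
  intro n
  induction n with
  | zero =>
    intro π t
    rw [hunsafe, hunsafe]
    split
    · simp
    · simp
  | succ n ih =>
    intro π t
    rw [hunsafe, hunsafe]
    split
    · apply Finset.sum_le_sum
      intro x _
      exact mul_le_mul_right (ih _ _) _
    · simp

lemma hunsafe_mono_le (M : POMDP L A O) (T : Set L) (π) (t : L) {m n : ℕ} (h : m ≤ n) :
    hunsafe M T π t m ≤ hunsafe M T π t n :=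
  monotone_nat_of_le_succ (fun k => hunsafe_mono M T k π t) h

end PSafe
set_option linter.unusedSectionVars false
namespace PSafe

variable {L A O : Type} [Fintype L] [Fintype A]

lemma ppAux_le_one (M : POMDP L A O) :
    ∀ (h : List (A × L)) (π) (t : L), M.prefProbAux π t h ≤ 1 := by
  intro h
  induction h with
  | nil => intro π t; exact le_of_eq rfl
  | cons x h ih =>
    intro π t
    obtain ⟨a, u⟩ := x
    rw [POMDP.prefProbAux]
    calc π [] a * M.δ t a u * M.prefProbAux (fun h' => π ((a, u) :: h')) u h
        ≤ 1 * 1 * 1 := by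
          apply mul_le_mul' (mul_le_mul' ?_ ?_) (ih _ _)
          · exact PMF.coe_le_one _ _
          · exact PMF.coe_le_one _ _
    _ = 1 := by norm_num

lemma ppAux_cons (M : POMDP L A O) (π) (t : L) (a : A) (u : L) (h : List (A × L)) :
    M.prefProbAux π t ((a, u) :: h)
      = π [] a * M.δ t a u * M.prefProbAux (shift π a u) u h := rfl

lemma shiftL_nil (π : List (A × L) → PMF A) : shiftL π [] = π := rfl

lemma shiftL_cons (π : List (A × L) → PMF A) (a : A) (u : L) (w : List (A × L)) :
    shiftL π ((a, u) :: w) = shiftL (shift π a u) w := rfl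

lemma endSt_cons (t : L) (a : A) (u : L) (h : List (A × L)) :
    endSt t ((a, u) :: h) = endSt u h := rfl

lemma ppAux_append (M : POMDP L A O) :
    ∀ (w : List (A × L)) (π) (t : L) (h : List (A × L)),
      M.prefProbAux π t (w ++ h)
        = M.prefProbAux π t w * M.prefProbAux (shiftL π w) (endSt t w) h := by
  intro w
  induction w with
  | nil =>
    intro π t h
    rw [List.nil_append, shiftL_nil]
    show M.prefProbAux π t h = M.prefProbAux π t [] * _
    rw [POMDP.prefProbAux, one_mul]
    rfl
  | cons x w ih =>
    intro π t h
    obtain ⟨a, u⟩ := x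
    rw [List.cons_append, ppAux_cons, ppAux_cons, ih, shiftL_cons, endSt_cons, mul_assoc, mul_assoc, mul_assoc]

lemma ppAux_agree (M : POMDP L A O) :
    ∀ (h : List (A × L)) (π π') (t : L),
      (∀ w : List (A × L), w.length < h.length → π w = π' w) →
      M.prefProbAux π t h = M.prefProbAux π' t h := by
  intro h
  induction h with
  | nil => intro _ _ _ _; rfl
  | cons x h ih =>
    intro π π' t hag
    obtain ⟨a, u⟩ := x
    rw [ppAux_cons, ppAux_cons]
    have h0 : π [] = π' [] := hag [] (by simp)
    rw [h0]
    congr 1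
    apply ih
    intro w hw
    exact hag ((a, u) :: w) (by simpa using Nat.succ_lt_succ hw)

lemma ppAux_take_le (M : POMDP L A O) (π) (t : L) (h : List (A × L)) (k : ℕ) :
    M.prefProbAux π t h ≤ M.prefProbAux π t (h.take k) := by
  conv_lhs => rw [← List.take_append_drop k h]
  rw [ppAux_append]
  exact mul_le_of_le_one_right' (ppAux_le_one M _ _ _)

lemma endSt_append :
    ∀ (w : List (A × L)) (t : L) (h : List (A × L)),
      endSt t (w ++ h) = endSt (endSt t w) h
  | [], _, _ => rfl
  | (a, u) :: w, t, h => by rw [List.cons_append, endSt_cons, endSt_cons, endSt_append w]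

end PSafe
open scoped Classical
set_option linter.unusedSectionVars false
namespace PSafe

variable {L A O : Type} [Fintype L] [Fintype A]

lemma sind_nil (T : Set L) (t : L) : sind T t ([] : List (A × L)) = if t ∈ T then 1 else 0 := by
  simp [sind, POMDP.statesOf]

lemma forall_statesOf_cons {T : Set L} (t : L) (a : A) (u : L) (h : List (A × L)) :
    (∀ s ∈ POMDP.statesOf t ((a, u) :: h), s ∈ T)
      ↔ t ∈ T ∧ ∀ s ∈ POMDP.statesOf u h, s ∈ T := by
  simp only [POMDP.statesOf, List.map_cons, List.mem_cons]
  constructor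
  · intro H
    refine ⟨H t (Or.inl rfl), fun s hs => H s ?_⟩
    tauto
  · rintro ⟨h1, h2⟩ s hs
    rcases hs with rfl | rfl | hs
    · exact h1
    · exact h2 _ (Or.inl rfl)
    · exact h2 _ (Or.inr hs)

lemma sind_cons (T : Set L) (t : L) (a : A) (u : L) (h : List (A × L)) :
    sind T t ((a, u) :: h) = (if t ∈ T then (1:ℝ≥0∞) else 0) * sind T u h := by
  simp only [sind, forall_statesOf_cons]
  by_cases ht : t ∈ T <;> by_cases hu : ∀ s ∈ POMDP.statesOf u h, s ∈ T <;>
    simp [ht, hu]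

lemma endSt_mem_statesOf : ∀ (h : List (A × L)) (t : L),
    endSt t h ∈ POMDP.statesOf t h
  | [], t => by simp [endSt, POMDP.statesOf]
  | (a, u) :: h, t => by
    rw [endSt_cons]
    have := endSt_mem_statesOf h u
    simp only [POMDP.statesOf, List.map_cons, List.mem_cons] at this ⊢
    tauto

/-- Decomposition of the finite-horizon safety probability at time `j`. -/
lemma hsafe_decomp (M : POMDP L A O) (T : Set L) :
    ∀ (j : ℕ) (k : ℕ) (π) (t : L),
      hsafe M T π t (j + k)
        = ∑ f : Fin j → A × L,
            sind T t (List.ofFn f) *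
              (M.prefProbAux π t (List.ofFn f) *
                hsafe M T (shiftL π (List.ofFn f)) (endSt t (List.ofFn f)) k) := by
  intro j
  induction j with
  | zero =>
    intro k π t
    rw [Nat.zero_add]
    rw [Fintype.sum_unique]
    have h0 : (List.ofFn (default : Fin 0 → A × L)) = [] := by simp
    rw [h0, sind_nil, shiftL_nil]
    by_cases ht : t ∈ T
    · simp only [ht, if_true, one_mul]
      show hsafe M T π t k = M.prefProbAux π t [] * hsafe M T π (endSt t []) k
      rw [show M.prefProbAux π t [] = 1 from rfl, one_mul]
      rfl
    · simp [ht, hsafe_notmem M T π ht]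
  | succ j ih =>
    intro k π t
    have hj : j + 1 + k = (j + k) + 1 := by omega
    rw [hj, hsafe]
    rw [← Equiv.sum_comp (Fin.consEquiv (fun _ : Fin (j+1) => A × L))
      (fun f : Fin (j+1) → A × L =>
        sind T t (List.ofFn f) *
          (M.prefProbAux π t (List.ofFn f) *
            hsafe M T (shiftL π (List.ofFn f)) (endSt t (List.ofFn f)) k))]
    conv_rhs => rw [Fintype.sum_prod_type]
    have hofn : ∀ (x : A × L) (g : Fin j → A × L),
        List.ofFn ((Fin.consEquiv (fun _ : Fin (j+1) => A × L)) (x, g)) = x :: List.ofFn g := by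
      intro x g
      rw [List.ofFn_succ]
      simp [Fin.consEquiv]
    by_cases ht : t ∈ T
    · rw [if_pos ht]
      apply Finset.sum_congr rfl
      intro x _
      obtain ⟨a, u⟩ := x
      rw [ih]
      rw [Finset.mul_sum]
      apply Finset.sum_congr rfl
      intro g _
      rw [hofn (a,u) g, sind_cons, ppAux_cons, endSt_cons, shiftL_cons]
      simp only [ht, if_true, one_mul]
      ring
    · rw [if_neg ht]
      symm
      apply Finset.sum_eq_zero
      intro x _
      apply Finset.sum_eq_zero
      intro g _
      obtain ⟨a, u⟩ := x
      rw [hofn (a,u) g, sind_cons]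
      simp [ht]

lemma hsafe_eq_sum (M : POMDP L A O) (T : Set L) (j : ℕ) (π) (t : L) :
    hsafe M T π t j
      = ∑ f : Fin j → A × L, sind T t (List.ofFn f) * M.prefProbAux π t (List.ofFn f) := by
  have := hsafe_decomp M T j 0 π t
  rw [Nat.add_zero] at this
  rw [this]
  apply Finset.sum_congr rfl
  intro f _
  by_cases hs : ∀ s ∈ POMDP.statesOf t (List.ofFn f), s ∈ T
  · have hend : endSt t (List.ofFn f) ∈ T := hs _ (endSt_mem_statesOf _ _)
    have h1 : hsafe M T (shiftL π (List.ofFn f)) (endSt t (List.ofFn f)) 0 = 1 := by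
      rw [hsafe]; simp [hend]
    rw [h1, mul_one]
  · have h0 : sind T t (List.ofFn f) = 0 := by simp [sind, hs]
    rw [h0, zero_mul, zero_mul]

/-- The finite-horizon safety probability agrees with `horizonProb`. -/
lemma horizonProb_safe_eq (M : POMDP L A O) (T : Set L) (α : POMDP.Strategy L A)
    (t : L) (n : ℕ) :
    M.horizonProb α t n (fun h => ∀ s ∈ POMDP.statesOf t h, s ∈ T)
      = hsafe M T (α t) t n := by
  rw [POMDP.horizonProb, hsafe_eq_sum]
  apply Finset.sum_congr rfl
  intro f _
  rw [Set.indicator_apply]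
  simp only [Set.mem_setOf_eq]
  by_cases hs : ∀ s ∈ POMDP.statesOf t (List.ofFn f), s ∈ T
  · rw [if_pos hs, show sind T t (List.ofFn f) = 1 by simp only [sind]; exact if_pos hs, one_mul]
    rfl
  · rw [if_neg hs, show sind T t (List.ofFn f) = 0 by simp only [sind]; exact if_neg hs, zero_mul]

lemma safeProb_eq (M : POMDP L A O) (T : Set L) (α : POMDP.Strategy L A) (t : L) :
    M.safeProb α t T = ⨅ n, hsafe M T (α t) t n := by
  rw [POMDP.safeProb]
  exact iInf_congr (fun n => horizonProb_safe_eq M T α t n)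

end PSafe
open scoped Classical
set_option linter.unusedSectionVars false
namespace PSafe

variable {L A O : Type} [Fintype L] [Fintype A]

lemma exists_ofFn {β : Type} (h : List β) : ∃ f : Fin h.length → β, List.ofFn f = h :=
  ⟨h.get, List.ofFn_get h⟩

lemma statesOf_length (t : L) (h : List (A × L)) :
    (POMDP.statesOf t h).length = h.length + 1 := by
  simp [POMDP.statesOf]

lemma endSt_eq_get : ∀ (h : List (A × L)) (t : L),
    endSt t h = (POMDP.statesOf t h).get
      ⟨h.length, by rw [statesOf_length]; omega⟩
  | [], t => rfl
  | (a, u) :: h, t => by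
    rw [endSt_cons, endSt_eq_get h u]
    rfl

lemma statesOf_take (t : L) (h : List (A × L)) (k : ℕ) :
    POMDP.statesOf t (h.take k) = (POMDP.statesOf t h).take (k + 1) := by
  simp [POMDP.statesOf, List.map_take]

/-- If a prefix witnesses the until-condition then its probability bounds
`untilProb` from below. -/
lemma le_untilProb (M : POMDP L A O) (α : POMDP.Strategy L A) (l : L)
    (T₁ T₂ : Set L) (h : List (A × L))
    (hP : ∃ k, ∃ hk : k < (POMDP.statesOf l h).length,
      (POMDP.statesOf l h).get ⟨k, hk⟩ ∈ T₂ ∧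
      ∀ j, ∀ hj : j < (POMDP.statesOf l h).length, j ≤ k →
        (POMDP.statesOf l h).get ⟨j, hj⟩ ∈ T₁) :
    M.prefProb α l h ≤ M.untilProb α l T₁ T₂ := by
  rw [POMDP.untilProb]
  refine le_trans ?_ (le_iSup _ h.length)
  rw [POMDP.horizonProb]
  obtain ⟨f, hf⟩ := exists_ofFn h
  set S : Set (Fin h.length → A × L) :=
    {g : Fin h.length → A × L | ∃ k, ∃ hk : k < (POMDP.statesOf l (List.ofFn g)).length,
      (POMDP.statesOf l (List.ofFn g)).get ⟨k, hk⟩ ∈ T₂ ∧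
      ∀ j, ∀ hj : j < (POMDP.statesOf l (List.ofFn g)).length, j ≤ k →
        (POMDP.statesOf l (List.ofFn g)).get ⟨j, hj⟩ ∈ T₁} with hS
  have hmem : f ∈ S := by
    rw [hS]
    show ∃ _, _
    rw [hf]
    exact hP
  have heq : M.prefProb α l h
      = Set.indicator S (fun g : Fin h.length → A × L => M.prefProb α l (List.ofFn g)) f := by
    rw [Set.indicator_apply, if_pos hmem, hf]
  rw [heq]
  exact Finset.single_le_sum (fun g _ => zero_le) (Finset.mem_univ f)

/-- A safe consistent prefix gives a positive until-probability to its end state. -/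
lemma untilProb_pos_of_safe_prefix (M : POMDP L A O) (α : POMDP.Strategy L A) (l : L)
    (T : Set L) (h : List (A × L))
    (hsafe : ∀ s ∈ POMDP.statesOf l h, s ∈ T)
    (hpos : 0 < M.prefProb α l h) :
    0 < M.untilProb α l T {endSt l h} := by
  refine lt_of_lt_of_le hpos (le_untilProb M α l T _ h ?_)
  refine ⟨h.length, by rw [statesOf_length]; omega, ?_, ?_⟩
  · rw [endSt_eq_get]
    exact rfl
  · intro j hj _
    exact hsafe _ (List.get_mem _ _)

/-- From a positive until-probability, extract a safe consistent prefix ending in `T₂`. -/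
lemma until_extract (M : POMDP L A O) (α : POMDP.Strategy L A) (l : L)
    (T₁ T₂ : Set L) (hpos : 0 < M.untilProb α l T₁ T₂) :
    ∃ h : List (A × L), 0 < M.prefProb α l h ∧
      (∀ s ∈ POMDP.statesOf l h, s ∈ T₁) ∧ endSt l h ∈ T₂ := by
  rw [POMDP.untilProb] at hpos
  have : ∃ n, 0 < M.horizonProb α l n (fun h => ∃ k, ∃ hk : k < (POMDP.statesOf l h).length,
      (POMDP.statesOf l h).get ⟨k, hk⟩ ∈ T₂ ∧
      ∀ j, ∀ hj : j < (POMDP.statesOf l h).length, j ≤ k →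
        (POMDP.statesOf l h).get ⟨j, hj⟩ ∈ T₁) := by
    by_contra hc
    push_neg at hc
    simp only [nonpos_iff_eq_zero] at hc
    rw [iSup_congr hc] at hpos
    simp at hpos
  obtain ⟨n, hn⟩ := this
  rw [POMDP.horizonProb] at hn
  obtain ⟨f, -, hf⟩ := Finset.exists_ne_zero_of_sum_ne_zero (pos_iff_ne_zero.mp hn)
  rw [Set.indicator_apply] at hf
  split at hf
  case isFalse => exact absurd rfl hf
  case isTrue hmem =>
  obtain ⟨k, hk, hT2, hT1⟩ := hmem
  set w : List (A × L) := List.ofFn f with hw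
  have hppw : 0 < M.prefProb α l w := pos_iff_ne_zero.mpr hf
  have hkw : k ≤ w.length := by
    rw [statesOf_length] at hk; omega
  refine ⟨w.take k, ?_, ?_, ?_⟩
  · exact lt_of_lt_of_le hppw (ppAux_take_le M _ l w k)
  · intro s hs
    rw [statesOf_take] at hs
    obtain ⟨j, hj, rfl⟩ := List.getElem_of_mem hs
    have hjlen : j < (POMDP.statesOf l w).length := by
      have := hj
      rw [List.length_take] at this
      rw [statesOf_length]
      rw [statesOf_length] at hk
      omega
    have hjk : j ≤ k := by
      have := hj
      rw [List.length_take] at this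
      omega
    have := hT1 j hjlen hjk
    rw [List.getElem_take]
    rw [List.get_eq_getElem] at this
    exact this
  · have hlen : (w.take k).length = k := by
      rw [List.length_take]; omega
    rw [endSt_eq_get]
    have : (POMDP.statesOf l (w.take k)).get ⟨(w.take k).length, by rw [statesOf_length]; omega⟩
        = (POMDP.statesOf l w).get ⟨k, hk⟩ := by
      simp only [List.get_eq_getElem, statesOf_take, List.getElem_take, hlen]
    rw [this]
    exact hT2

end PSafe
open scoped Classical
set_option linter.unusedSectionVars false
namespace PSafe

variable {L A O : Type} [Fintype L] [Fintype A]

lemma single_le_hsafe (M : POMDP L A O) (T : Set L) (π) (t : L) (w : List (A × L)) :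
    sind T t w * M.prefProbAux π t w ≤ hsafe M T π t w.length := by
  rw [hsafe_eq_sum]
  obtain ⟨f, hf⟩ := exists_ofFn w
  calc sind T t w * M.prefProbAux π t w
      = sind T t (List.ofFn f) * M.prefProbAux π t (List.ofFn f) := by rw [hf]
    _ ≤ _ := Finset.single_le_sum
        (f := fun g : Fin w.length → A × L =>
          sind T t (List.ofFn g) * M.prefProbAux π t (List.ofFn g))
        (fun g _ => zero_le) (Finset.mem_univ f)

lemma single_le_hsafe_decomp (M : POMDP L A O) (T : Set L) (π) (t : L)
    (w : List (A × L)) (k : ℕ) :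
    sind T t w * (M.prefProbAux π t w * hsafe M T (shiftL π w) (endSt t w) k)
      ≤ hsafe M T π t (w.length + k) := by
  rw [hsafe_decomp]
  obtain ⟨f, hf⟩ := exists_ofFn w
  calc sind T t w * (M.prefProbAux π t w * hsafe M T (shiftL π w) (endSt t w) k)
      = sind T t (List.ofFn f) * (M.prefProbAux π t (List.ofFn f) *
          hsafe M T (shiftL π (List.ofFn f)) (endSt t (List.ofFn f)) k) := by rw [hf]
    _ ≤ _ := Finset.single_le_sum
        (f := fun g : Fin w.length → A × L =>
          sind T t (List.ofFn g) * (M.prefProbAux π t (List.ofFn g) *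
            hsafe M T (shiftL π (List.ofFn g)) (endSt t (List.ofFn g)) k))
        (fun g _ => zero_le) (Finset.mem_univ f)

lemma sind_eq_one {T : Set L} {t : L} {h : List (A × L)}
    (hs : ∀ s ∈ POMDP.statesOf t h, s ∈ T) : sind T t h = 1 := by
  simp only [sind]
  exact if_pos hs

/-- Reverse direction of the main theorem. -/
theorem reverse_dir (M : POMDP L A O) (T : Set L) (l l' : L)
    (h1 : ∃ α : POMDP.Strategy L A, M.ObservationBased α ∧ 0 < M.untilProb α l T {l'})
    (h2 : ∃ α : POMDP.Strategy L A, M.ObservationBased α ∧ M.safeProb α l' T = 1) :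
    ∃ α : POMDP.Strategy L A, M.ObservationBased α ∧ 0 < M.safeProb α l T := by
  obtain ⟨α₁, hob1, hu⟩ := h1
  obtain ⟨α₂, hob2, hs2⟩ := h2
  obtain ⟨h₀, hpp, hsf, hend⟩ := until_extract M α₁ l T {l'} hu
  rw [Set.mem_singleton_iff] at hend
  set k := h₀.length with hk
  set γ : POMDP.Strategy L A :=
    fun t h => if h.length < k then α₁ t h else α₂ l' (h.drop k) with hγ
  refine ⟨γ, ?_, ?_⟩
  · intro t t' h h' hobs hfst hosnd
    have hlen : h.length = h'.length := by
      have := congrArg List.length hfst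
      simpa using this
    rw [hγ]
    dsimp only
    by_cases hl : h.length < k
    · rw [if_pos hl, if_pos (hlen ▸ hl)]
      exact hob1 t t' h h' hobs hfst hosnd
    · rw [if_neg hl, if_neg (hlen ▸ hl)]
      apply hob2 l' l' _ _ rfl
      · rw [List.map_drop, List.map_drop, hfst]
      · rw [List.map_drop, List.map_drop, hosnd]
  · rw [safeProb_eq]
    refine lt_of_lt_of_le hpp (le_iInf fun n => ?_)
    by_cases hn : n < k
    · set w := h₀.take n with hw
      have hwl : w.length = n := by
        rw [hw, List.length_take]; omega
      have hsafew : ∀ s ∈ POMDP.statesOf l w, s ∈ T := by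
        intro s hs
        rw [hw, statesOf_take] at hs
        exact hsf s (List.take_subset _ _ hs)
      have hagree : M.prefProbAux (γ l) l w = M.prefProbAux (α₁ l) l w := by
        apply ppAux_agree
        intro v hv
        rw [hγ]
        dsimp only
        rw [if_pos (by omega : v.length < k)]
      calc M.prefProb α₁ l h₀ ≤ M.prefProbAux (α₁ l) l w := ppAux_take_le M (α₁ l) l h₀ n
        _ = sind T l w * M.prefProbAux (γ l) l w := by
            rw [sind_eq_one hsafew, hagree, one_mul]
        _ ≤ hsafe M T (γ l) l w.length := single_le_hsafe M T (γ l) l w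
        _ = hsafe M T (γ l) l n := by rw [hwl]
    · have hagree : M.prefProbAux (γ l) l h₀ = M.prefProbAux (α₁ l) l h₀ := by
        apply ppAux_agree
        intro v hv
        rw [hγ]
        dsimp only
        rw [if_pos (by omega : v.length < k)]
      have hshift : shiftL (γ l) h₀ = α₂ l' := by
        funext v
        show γ l (h₀ ++ v) = α₂ l' v
        rw [hγ]
        dsimp only
        rw [if_neg (by rw [List.length_append]; omega)]
        rw [List.drop_left' hk.symm]
      have hX : (1:ℝ≥0∞) ≤ hsafe M T (α₂ l') l' (n - k) := by
        rw [← hs2, safeProb_eq]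
        exact iInf_le _ _
      calc M.prefProb α₁ l h₀
          ≤ M.prefProbAux (α₁ l) l h₀ * hsafe M T (α₂ l') l' (n - k) :=
            le_mul_of_one_le_right' hX
        _ = sind T l h₀ * (M.prefProbAux (γ l) l h₀ *
              hsafe M T (shiftL (γ l) h₀) (endSt l h₀) (n - k)) := by
            rw [sind_eq_one hsf, hagree, hshift, hend, one_mul]
        _ ≤ hsafe M T (γ l) l (h₀.length + (n - k)) := single_le_hsafe_decomp M T (γ l) l h₀ (n - k)
        _ = hsafe M T (γ l) l n := by congr 1; omega

end PSafe
open scoped Classical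
set_option linter.unusedSectionVars false
namespace PSafe

variable {L A O : Type} [Fintype L] [Fintype A]

/-- One-step successors of a support. -/
def post (M : POMDP L A O) (B : Set L) (a : A) : Set L := {u | ∃ s ∈ B, 0 < M.δ s a u}

/-- One-step successors with a given observation. -/
def postObs (M : POMDP L A O) (B : Set L) (a : A) (o : O) : Set L :=
  {u | u ∈ post M B a ∧ M.obs u = o}

/-- The sure-safety operator on supports. -/
def Phi (M : POMDP L A O) (T : Set L) (S : Set (Set L)) : Set (Set L) :=
  {B | B ⊆ T ∧ ∃ a, post M B a ⊆ T ∧ ∀ o, postObs M B a o ∈ S}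

/-- Sure-safety winning supports. -/
def Win (M : POMDP L A O) (T : Set L) : Set (Set L) :=
  {B | ∀ n, B ∈ (Phi M T)^[n] Set.univ}

lemma Phi_mono (M : POMDP L A O) (T : Set L) {S S' : Set (Set L)} (h : S ⊆ S') :
    Phi M T S ⊆ Phi M T S' := by
  rintro B ⟨hBT, a, h1, h2⟩
  exact ⟨hBT, a, h1, fun o => h (h2 o)⟩

lemma iter_succ_subset (M : POMDP L A O) (T : Set L) :
    ∀ n, (Phi M T)^[n+1] Set.univ ⊆ (Phi M T)^[n] Set.univ := by
  intro n
  induction n with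
  | zero => intro B _; trivial
  | succ n ih =>
    intro B hB
    rw [Function.iterate_succ_apply'] at hB ⊢
    exact Phi_mono M T ih hB

lemma iter_antitone (M : POMDP L A O) (T : Set L) {m n : ℕ} (h : m ≤ n) :
    (Phi M T)^[n] Set.univ ⊆ (Phi M T)^[m] Set.univ := by
  induction n with
  | zero => rw [Nat.le_zero.mp h]
  | succ n ih =>
    rcases Nat.lt_or_ge m (n+1) with hlt | hge
    · exact (iter_succ_subset M T n).trans (ih (by omega))
    · have : m = n + 1 := by omega
      rw [this]

lemma post_empty (M : POMDP L A O) (a : A) : post M (∅ : Set L) a = ∅ := by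
  ext u
  simp [post]

lemma empty_mem_iter (M : POMDP L A O) (T : Set L) [Nonempty A] :
    ∀ n, (∅ : Set L) ∈ (Phi M T)^[n] Set.univ := by
  intro n
  induction n with
  | zero => trivial
  | succ n ih =>
    rw [Function.iterate_succ_apply']
    refine ⟨by simp, Classical.arbitrary A, ?_, fun o => ?_⟩
    · rw [post_empty]; simp
    · have : postObs M (∅ : Set L) (Classical.arbitrary A) o = ∅ := by
        ext u; simp [postObs, post_empty, post]
      rw [this]; exact ih

lemma win_subset_T (M : POMDP L A O) (T : Set L) {B : Set L} (hB : B ∈ Win M T) :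
    B ⊆ T := by
  have := hB 1
  rw [Function.iterate_one] at this
  exact this.1

lemma win_unfold (M : POMDP L A O) (T : Set L) {B : Set L} (hB : B ∈ Win M T) :
    ∃ a, post M B a ⊆ T ∧ ∀ o, postObs M B a o ∈ Win M T := by
  have hBn : ∀ n, B ∈ Phi M T ((Phi M T)^[n] Set.univ) := by
    intro n
    have := hB (n+1)
    rwa [Function.iterate_succ_apply'] at this
  choose g hg1 hg2 using fun n => (hBn n).2
  obtain ⟨a, hfib⟩ := Finite.exists_infinite_fiber g
  have hfib' : (g ⁻¹' {a}).Infinite := Set.infinite_coe_iff.mp hfib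
  obtain ⟨n₀, hn₀⟩ := hfib'.nonempty
  refine ⟨a, ?_, fun o m => ?_⟩
  · have h1 := hg1 n₀
    rw [Set.mem_preimage, Set.mem_singleton_iff] at hn₀
    rwa [hn₀] at h1
  · obtain ⟨n, hn, hnm⟩ := hfib'.exists_gt m
    rw [Set.mem_preimage, Set.mem_singleton_iff] at hn
    have := hg2 n o
    rw [hn] at this
    exact iter_antitone M T (le_of_lt hnm) this

/-- The action chosen at a winning support. -/
noncomputable def act (M : POMDP L A O) (T : Set L) [Nonempty A] (B : Set L) : A :=
  if hB : ∃ a, post M B a ⊆ T ∧ ∀ o, postObs M B a o ∈ Win M T then hB.choose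
  else Classical.arbitrary A

/-- The observation record of a history. -/
def obsHist (M : POMDP L A O) (h : List (A × L)) : List (A × O) :=
  h.map (fun p => (p.1, M.obs p.2))

/-- Running the support automaton. -/
def suppRun (M : POMDP L A O) : Set L → List (A × O) → Set L
  | B, [] => B
  | B, (a, o) :: w => suppRun M (postObs M B a o) w

/-- The support-based strategy. -/
noncomputable def piB (M : POMDP L A O) (T : Set L) [Nonempty A] (B : Set L) :
    List (A × L) → PMF A :=
  fun h => PMF.pure (act M T (suppRun M B (obsHist M h)))

lemma piB_shift (M : POMDP L A O) (T : Set L) [Nonempty A] (B : Set L) (a : A) (u : L) :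
    shift (piB M T B) a u = piB M T (postObs M B a (M.obs u)) := rfl

lemma piB_win (M : POMDP L A O) (T : Set L) [Nonempty A] :
    ∀ (n : ℕ) (B : Set L), B ∈ Win M T → ∀ t ∈ B, hsafe M T (piB M T B) t n = 1 := by
  intro n
  induction n with
  | zero =>
    intro B hB t ht
    rw [hsafe, if_pos (win_subset_T M T hB ht)]
  | succ n ih =>
    intro B hB t ht
    rw [hsafe, if_pos (win_subset_T M T hB ht)]
    have hc : ∃ a, post M B a ⊆ T ∧ ∀ o, postObs M B a o ∈ Win M T := win_unfold M T hB
    have hact : act M T B = hc.choose := dif_pos hc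
    obtain ⟨hpost, hwin⟩ := hc.choose_spec
    set a₀ := hc.choose with ha₀
    have hpi : piB M T B [] = PMF.pure a₀ := by
      rw [piB]
      show PMF.pure (act M T B) = _
      rw [hact]
    rw [Fintype.sum_prod_type]
    rw [Finset.sum_eq_single a₀ (fun b _ hb => ?_) (fun hb => absurd (Finset.mem_univ a₀) hb)]
    · have : ∀ u : L,
          piB M T B [] a₀ * M.δ t a₀ u * hsafe M T (shift (piB M T B) a₀ u) u n
            = M.δ t a₀ u := by
        intro u
        rw [hpi, PMF.pure_apply, if_pos rfl, one_mul]
        by_cases hδ : M.δ t a₀ u = 0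
        · rw [hδ, zero_mul]
        · have hu : u ∈ postObs M B a₀ (M.obs u) :=
            ⟨⟨t, ht, pos_iff_ne_zero.mpr hδ⟩, rfl⟩
          rw [piB_shift, ih _ (hwin (M.obs u)) u hu, mul_one]
      simp_rw [this]
      exact pmfL_sum_eq_one (M.δ t a₀)
    · apply Finset.sum_eq_zero
      intro u _
      rw [hpi, PMF.pure_apply, if_neg hb, zero_mul, zero_mul]

lemma obsHist_congr (M : POMDP L A O) :
    ∀ (h h' : List (A × L)), h.map Prod.fst = h'.map Prod.fst →
      h.map (fun p => M.obs p.2) = h'.map (fun p => M.obs p.2) →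
      obsHist M h = obsHist M h'
  | [], [], _, _ => rfl
  | [], x :: h', hf, _ => by simp at hf
  | x :: h, [], hf, _ => by simp at hf
  | x :: h, y :: h', hf, ho => by
    simp only [List.map_cons, List.cons.injEq] at hf ho
    show (x.1, M.obs x.2) :: obsHist M h = (y.1, M.obs y.2) :: obsHist M h'
    rw [hf.1, ho.1, obsHist_congr M h h' hf.2 ho.2]

/-- If the singleton support is sure-safety winning, there is an almost-surely
safe observation-based strategy. -/
theorem as_safe_of_win (M : POMDP L A O) (T : Set L) (s : L)
    (hW : {s} ∈ Win M T) :
    ∃ β : POMDP.Strategy L A, M.ObservationBased β ∧ M.safeProb β s T = 1 := by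
  have hA : Nonempty A := by
    have := hW 1
    rw [Function.iterate_one] at this
    exact ⟨this.2.choose⟩
  set ini : O → Set L := fun o => if o = M.obs s then {s} else ∅ with hini
  set β : POMDP.Strategy L A := fun t h => piB M T (ini (M.obs t)) h with hβ
  refine ⟨β, ?_, ?_⟩
  · intro t t' h h' hobs hfst hosnd
    rw [hβ]
    dsimp only
    rw [hobs]
    have hoh : obsHist M h = obsHist M h' := obsHist_congr M h h' hfst hosnd
    show PMF.pure (act M T (suppRun M (ini (M.obs t')) (obsHist M h)))
      = PMF.pure (act M T (suppRun M (ini (M.obs t')) (obsHist M h')))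
    rw [hoh]
  · rw [safeProb_eq]
    have hβs : β s = piB M T {s} := by
      rw [hβ]
      dsimp only
      rw [hini]
      dsimp only
      rw [if_pos rfl]
    rw [hβs]
    simp [piB_win M T _ {s} hW s rfl]

end PSafe
open scoped Classical
set_option linter.unusedSectionVars false
set_option maxHeartbeats 1000000
namespace PSafe

variable {L A O : Type} [Fintype L] [Fintype A]

/-- Minimal positive transition probability. -/
noncomputable def lam (M : POMDP L A O) : ℝ≥0∞ :=
  Finset.univ.inf (fun p : L × A × L =>
    if 0 < M.δ p.1 p.2.1 p.2.2 then M.δ p.1 p.2.1 p.2.2 else 1)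

lemma lam_pos (M : POMDP L A O) : 0 < lam M := by
  rw [lam, Finset.lt_inf_iff (by simp : (0:ℝ≥0∞) < ⊤)]
  intro p _
  split
  · assumption
  · exact zero_lt_one

lemma lam_le (M : POMDP L A O) {s : L} {a : A} {u : L} (h : 0 < M.δ s a u) :
    lam M ≤ M.δ s a u := by
  have h2 : (fun p : L × A × L =>
      if 0 < M.δ p.1 p.2.1 p.2.2 then M.δ p.1 p.2.1 p.2.2 else 1) (s, a, u) = M.δ s a u := by
    simp only []
    exact if_pos h
  rw [lam]
  exact le_trans (Finset.inf_le (Finset.mem_univ (s, a, u))) (le_of_eq h2)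

lemma lam_le_one (M : POMDP L A O) [Nonempty L] [Nonempty A] : lam M ≤ 1 := by
  obtain ⟨s⟩ := (inferInstance : Nonempty L)
  obtain ⟨a⟩ := (inferInstance : Nonempty A)
  refine le_trans (Finset.inf_le (Finset.mem_univ (s, a, s))) ?_
  split
  · exact PMF.coe_le_one _ _
  · exact le_refl 1

/-- The leak constant. -/
noncomputable def cst (M : POMDP L A O) [Fintype A] : ℝ≥0∞ :=
  (Fintype.card A : ℝ≥0∞)⁻¹ * lam M

lemma cst_pos (M : POMDP L A O) : 0 < cst M := by
  apply ENNReal.mul_pos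
  · simp [ENNReal.inv_ne_zero, ENNReal.natCast_ne_top]
  · exact pos_iff_ne_zero.mp (lam_pos M)

lemma cst_le_one (M : POMDP L A O) [Nonempty L] [Nonempty A] : cst M ≤ 1 := by
  apply mul_le_one'
  · apply ENNReal.inv_le_one.mpr
    have h1 : (1:ℕ) ≤ Fintype.card A := Fintype.card_pos
    exact_mod_cast h1
  · exact lam_le_one M

/-- Observation-consistency of a history strategy. -/
def ObsCons (M : POMDP L A O) (π : List (A × L) → PMF A) : Prop :=
  ∀ h h' : List (A × L), h.map Prod.fst = h'.map Prod.fst →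
    h.map (fun p => M.obs p.2) = h'.map (fun p => M.obs p.2) → π h = π h'

lemma obsCons_shift (M : POMDP L A O) {π} (hπ : ObsCons M π) (a : A) (u : L) :
    ObsCons M (shift π a u) := by
  intro h h' hf ho
  exact hπ _ _ (by simp [hf]) (by simp [ho])

lemma obsCons_shiftL (M : POMDP L A O) {π} (hπ : ObsCons M π) (w : List (A × L)) :
    ObsCons M (shiftL π w) := by
  intro h h' hf ho
  exact hπ _ _ (by simp [hf]) (by simp [ho])

lemma shift_eq_of_obs (M : POMDP L A O) {π} (hπ : ObsCons M π) (a : A) {u u' : L}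
    (h : M.obs u = M.obs u') : shift π a u = shift π a u' := by
  funext v
  exact hπ _ _ (by simp) (by simp [h])

lemma exists_action (p : PMF A) : ∃ a, (Fintype.card A : ℝ≥0∞)⁻¹ ≤ p a := by
  haveI : Nonempty A := by
    obtain ⟨a, -⟩ := p.support_nonempty
    exact ⟨a⟩
  have hcard : (Fintype.card A : ℝ≥0∞) ≠ 0 := by
    exact_mod_cast Fintype.card_ne_zero
  obtain ⟨a, -, hmax⟩ := Finset.exists_max_image Finset.univ (fun b => p b) Finset.univ_nonempty
  refine ⟨a, ?_⟩
  have h1 : (1 : ℝ≥0∞) ≤ (Fintype.card A : ℝ≥0∞) * p a := by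
    rw [← pmf_sum_eq_one p]
    calc ∑ b : A, p b ≤ ∑ _b : A, p a :=
          Finset.sum_le_sum (fun b _ => hmax b (Finset.mem_univ b))
      _ = (Fintype.card A : ℝ≥0∞) * p a := by
          rw [Finset.sum_const, Finset.card_univ, nsmul_eq_mul]
  calc (Fintype.card A : ℝ≥0∞)⁻¹ = (Fintype.card A : ℝ≥0∞)⁻¹ * 1 := (mul_one _).symm
    _ ≤ (Fintype.card A : ℝ≥0∞)⁻¹ * ((Fintype.card A : ℝ≥0∞) * p a) := mul_le_mul_right h1 _
    _ = ((Fintype.card A : ℝ≥0∞)⁻¹ * (Fintype.card A : ℝ≥0∞)) * p a := (mul_assoc _ _ _).symm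
    _ = p a := by rw [ENNReal.inv_mul_cancel hcard (ENNReal.natCast_ne_top _), one_mul]

/-- The leak lemma: from a losing support, some state leaks out of `T`. -/
lemma leak (M : POMDP L A O) (T : Set L) :
    ∀ (n : ℕ) (B : Set L), B ∉ (Phi M T)^[n] Set.univ →
      ∀ π, ObsCons M π → ∃ t ∈ B, cst M ^ n ≤ hunsafe M T π t n := by
  intro n
  induction n with
  | zero => intro B hB; exact absurd trivial hB
  | succ n ih =>
    intro B hB π hπ
    rw [Function.iterate_succ_apply'] at hB
    haveI : Nonempty A := by
      obtain ⟨a, -⟩ := (π []).support_nonempty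
      exact ⟨a⟩
    by_cases hBT : B ⊆ T
    · have hna : ∀ a, ¬(post M B a ⊆ T ∧ ∀ o, postObs M B a o ∈ (Phi M T)^[n] Set.univ) :=
        fun a hc => hB ⟨hBT, a, hc⟩
      obtain ⟨a₀, ha₀⟩ := exists_action (π [])
      rcases not_and_or.mp (hna a₀) with hpost | hobs
      · rw [Set.not_subset] at hpost
        obtain ⟨u, hu_mem, huT⟩ := hpost
        obtain ⟨s, hsB, hδ⟩ := hu_mem
        refine ⟨s, hsB, ?_⟩
        haveI : Nonempty L := ⟨s⟩
        rw [hunsafe, if_pos (hBT hsB)]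
        calc cst M ^ (n+1) = cst M * cst M ^ n := pow_succ' _ _
          _ ≤ cst M * 1 := mul_le_mul_right (pow_le_one' (cst_le_one M) n) _
          _ = ((Fintype.card A : ℝ≥0∞)⁻¹ * lam M) * 1 := rfl
          _ ≤ π [] a₀ * M.δ s a₀ u * hunsafe M T (shift π a₀ u) u n := by
              rw [hunsafe_notmem M T _ huT n]
              exact mul_le_mul' (mul_le_mul' ha₀ (lam_le M hδ)) (le_refl 1)
          _ ≤ _ := Finset.single_le_sum
              (f := fun x : A × L => π [] x.1 * M.δ s x.1 x.2 *
                hunsafe M T (shift π x.1 x.2) x.2 n)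
              (fun x _ => zero_le) (Finset.mem_univ (a₀, u))
      · push_neg at hobs
        obtain ⟨o, ho⟩ := hobs
        have hne : (postObs M B a₀ o).Nonempty := by
          by_contra hc
          rw [Set.not_nonempty_iff_eq_empty] at hc
          rw [hc] at ho
          exact ho (empty_mem_iter M T n)
        obtain ⟨t₀, ht₀⟩ := hne
        obtain ⟨t', ht'mem, hle⟩ := ih _ ho (shift π a₀ t₀) (obsCons_shift M hπ a₀ t₀)
        obtain ⟨⟨s, hsB, hδ⟩, hot'⟩ := ht'mem
        refine ⟨s, hsB, ?_⟩
        rw [hunsafe, if_pos (hBT hsB)]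
        have hshift : shift π a₀ t₀ = shift π a₀ t' :=
          shift_eq_of_obs M hπ a₀ (ht₀.2.trans hot'.symm)
        rw [hshift] at hle
        calc cst M ^ (n+1) = cst M * cst M ^ n := pow_succ' _ _
          _ ≤ π [] a₀ * M.δ s a₀ t' * hunsafe M T (shift π a₀ t') t' n :=
              mul_le_mul' (mul_le_mul' ha₀ (lam_le M hδ)) hle
          _ ≤ _ := Finset.single_le_sum
              (f := fun x : A × L => π [] x.1 * M.δ s x.1 x.2 *
                hunsafe M T (shift π x.1 x.2) x.2 n)
              (fun x _ => zero_le) (Finset.mem_univ (a₀, t'))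
    · obtain ⟨t, htB, htT⟩ := Set.not_subset.mp hBT
      haveI : Nonempty L := ⟨t⟩
      refine ⟨t, htB, ?_⟩
      rw [hunsafe_notmem M T _ htT]
      exact pow_le_one' (cst_le_one M) (n+1)

/-- All end states of safe consistent prefixes have losing singleton supports. -/
def SafeReach (M : POMDP L A O) (T : Set L) (π : List (A × L) → PMF A) (t : L) (R : ℕ) : Prop :=
  ∀ h : List (A × L), (∀ s ∈ POMDP.statesOf t h, s ∈ T) → 0 < M.prefProbAux π t h →
    ({endSt t h} : Set L) ∉ (Phi M T)^[R] Set.univ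

lemma mem_statesOf_append {s t : L} (w h : List (A × L)) :
    s ∈ POMDP.statesOf t (w ++ h) →
      s ∈ POMDP.statesOf t w ∨ s ∈ POMDP.statesOf (endSt t w) h := by
  intro hs
  simp only [POMDP.statesOf, List.map_append, List.mem_cons, List.mem_append] at hs ⊢
  tauto

lemma safeReach_shiftL (M : POMDP L A O) (T : Set L) {π} {t : L} {R : ℕ}
    (hyp : SafeReach M T π t R) (w : List (A × L))
    (hsw : ∀ s ∈ POMDP.statesOf t w, s ∈ T) (hpw : 0 < M.prefProbAux π t w) :
    SafeReach M T (shiftL π w) (endSt t w) R := by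
  intro h hs hp
  have hsafe_all : ∀ s ∈ POMDP.statesOf t (w ++ h), s ∈ T := by
    intro s hmem
    rcases mem_statesOf_append w h hmem with h1 | h2
    · exact hsw s h1
    · exact hs s h2
  have hpos : 0 < M.prefProbAux π t (w ++ h) := by
    rw [ppAux_append]
    exact ENNReal.mul_pos (pos_iff_ne_zero.mp hpw) (pos_iff_ne_zero.mp hp)
  have := hyp (w ++ h) hsafe_all hpos
  rwa [endSt_append] at this

/-- Chain bound: the safety probability decays geometrically. -/
lemma chain (M : POMDP L A O) (T : Set L) (R : ℕ) :
    ∀ (m : ℕ) (π : List (A × L) → PMF A) (t : L), ObsCons M π → SafeReach M T π t R →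
      hsafe M T π t (m * R) ≤ (1 - cst M ^ R) ^ m := by
  intro m
  induction m with
  | zero =>
    intro π t _ _
    rw [Nat.zero_mul, pow_zero]
    exact hsafe_le_one M T 0 π t
  | succ m ih =>
    intro π t hπ hyp
    by_cases htT : t ∈ T
    · have hkey : hsafe M T π t R ≤ 1 - cst M ^ R := by
        have hsing : ({t} : Set L) ∉ (Phi M T)^[R] Set.univ := by
          apply hyp []
          · intro s hs
            simp only [POMDP.statesOf, List.map_nil, List.mem_singleton] at hs
            rwa [hs]
          · exact zero_lt_one
        obtain ⟨t', ht', hle⟩ := leak M T R {t} hsing π hπ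
        rw [Set.mem_singleton_iff] at ht'
        subst ht'
        have hsum := hsafe_add_hunsafe M T R π t'
        haveI : Nonempty L := ⟨t'⟩
        haveI : Nonempty A := ⟨((π []).support_nonempty).choose⟩
        apply ENNReal.le_sub_of_add_le_right
          (ENNReal.pow_ne_top (lt_of_le_of_lt (cst_le_one M) (by simp)).ne)
        calc hsafe M T π t' R + cst M ^ R ≤ hsafe M T π t' R + hunsafe M T π t' R :=
              add_le_add le_rfl hle
          _ = 1 := hsum
      have hm : (m + 1) * R = R + m * R := by ring
      rw [hm, hsafe_decomp]
      calc ∑ f : Fin R → A × L, sind T t (List.ofFn f) *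
              (M.prefProbAux π t (List.ofFn f) *
                hsafe M T (shiftL π (List.ofFn f)) (endSt t (List.ofFn f)) (m * R))
          ≤ ∑ f : Fin R → A × L, sind T t (List.ofFn f) *
              (M.prefProbAux π t (List.ofFn f) * (1 - cst M ^ R) ^ m) := by
            apply Finset.sum_le_sum
            intro f _
            by_cases hsind : ∀ s ∈ POMDP.statesOf t (List.ofFn f), s ∈ T
            · by_cases hpp : M.prefProbAux π t (List.ofFn f) = 0
              · rw [hpp, zero_mul, zero_mul]
              · refine mul_le_mul_right (mul_le_mul_right ?_ _) _
                exact ih _ _ (obsCons_shiftL M hπ _)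
                  (safeReach_shiftL M T hyp _ hsind (pos_iff_ne_zero.mpr hpp))
            · rw [show sind T t (List.ofFn f) = 0 by simp only [sind]; exact if_neg hsind,
                zero_mul, zero_mul]
        _ = (∑ f : Fin R → A × L, sind T t (List.ofFn f) *
              M.prefProbAux π t (List.ofFn f)) * (1 - cst M ^ R) ^ m := by
            rw [Finset.sum_mul]
            apply Finset.sum_congr rfl
            intro f _
            ring
        _ ≤ (1 - cst M ^ R) * (1 - cst M ^ R) ^ m := by
            apply mul_le_mul_left
            rw [← hsafe_eq_sum]
            exact hkey
        _ = (1 - cst M ^ R) ^ (m + 1) := (pow_succ' _ _).symm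
    · rw [hsafe_notmem M T π htT]
      exact zero_le

/-- Forward direction of the main theorem. -/
theorem forward_dir (M : POMDP L A O) (T : Set L) (l : L)
    (h : ∃ α : POMDP.Strategy L A, M.ObservationBased α ∧ 0 < M.safeProb α l T) :
    ∃ l' : L,
      (∃ α : POMDP.Strategy L A, M.ObservationBased α ∧ 0 < M.untilProb α l T {l'}) ∧
      (∃ α : POMDP.Strategy L A, M.ObservationBased α ∧ M.safeProb α l' T = 1) := by
  obtain ⟨α, hob, hpos⟩ := h
  by_contra hno
  push_neg at hno
  haveI : Nonempty A := by
    obtain ⟨a, -⟩ := (α l []).support_nonempty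
    exact ⟨a⟩
  haveI : Nonempty L := ⟨l⟩
  have hlose : ∀ h : List (A × L), (∀ s ∈ POMDP.statesOf l h, s ∈ T) →
      0 < M.prefProb α l h → ({endSt l h} : Set L) ∉ Win M T := by
    intro h hs hp hWin
    obtain ⟨β, hβob, hβ1⟩ := as_safe_of_win M T (endSt l h) hWin
    have huntil : 0 < M.untilProb α l T {endSt l h} :=
      untilProb_pos_of_safe_prefix M α l T h hs hp
    exact (hno (endSt l h) ⟨α, hob, huntil⟩ β hβob) hβ1
  set R : ℕ := Finset.univ.sup (fun s : L =>
    if hs : ∃ n, ({s} : Set L) ∉ (Phi M T)^[n] Set.univ then Nat.find hs else 0) with hRdef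
  have hR : ∀ s : L, ({s} : Set L) ∉ Win M T →
      ({s} : Set L) ∉ (Phi M T)^[R] Set.univ := by
    intro s hs
    have hex : ∃ n, ({s} : Set L) ∉ (Phi M T)^[n] Set.univ := by
      rw [Win, Set.mem_setOf_eq] at hs
      push_neg at hs
      exact hs
    have hle : Nat.find hex ≤ R := by
      rw [hRdef]
      refine le_trans ?_ (Finset.le_sup (Finset.mem_univ s))
      rw [dif_pos hex]
    intro hmem
    exact Nat.find_spec hex (iter_antitone M T hle hmem)
  have hyp : SafeReach M T (α l) l R := fun h hs hp => hR _ (hlose h hs hp)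
  have hobsc : ObsCons M (α l) := fun h h' hf ho => hob l l h h' rfl hf ho
  rw [safeProb_eq] at hpos
  have he1 : (1 : ℝ≥0∞) - cst M ^ R < 1 := by
    apply ENNReal.sub_lt_self ENNReal.one_ne_top one_ne_zero
    exact pow_ne_zero R (pos_iff_ne_zero.mp (cst_pos M))
  have htend := ENNReal.tendsto_pow_atTop_nhds_zero_of_lt_one he1
  obtain ⟨m, hm⟩ := (htend.eventually (gt_mem_nhds hpos)).exists
  have hchain := chain M T R m (α l) l hobsc hyp
  have : ⨅ n, hsafe M T (α l) l n ≤ (1 - cst M ^ R) ^ m :=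
    le_trans (iInf_le _ (m * R)) hchain
  exact absurd (lt_of_le_of_lt this hm) (lt_irrefl _)
end PSafe

/-- Player 1 has an observation-based strategy positive winning
for `Safe(T)` from `l` iff there is a state `l'` such that Player 1 has an
observation-based strategy positive winning for `Until(T, {l'})` from `l` and an
observation-based strategy almost-sure winning for `Safe(T)` from `l'`. -/
theorem positive_safe_iff_until_almost_safe {L A O : Type}
    [Fintype L] [Fintype A] (M : POMDP L A O) (T : Set L) (l : L) :
    (∃ α : POMDP.Strategy L A, M.ObservationBased α ∧ 0 < M.safeProb α l T) ↔
      ∃ l' : L,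
        (∃ α : POMDP.Strategy L A, M.ObservationBased α ∧ 0 < M.untilProb α l T {l'}) ∧
        (∃ α : POMDP.Strategy L A, M.ObservationBased α ∧ M.safeProb α l' T = 1) := by
  constructor
  · exact PSafe.forward_dir M T l
  · rintro ⟨l', h1, h2⟩
    exact PSafe.reverse_dir M T l l' h1 h2
end

section
/- Let G = (L, Σ, δ, O) be a POMDP, T ⊆ L, and l ∈ L. Player 1 has an observation-based strategy that is positive winning for coBüchi(T) from l if and only if there exists a state l' reachable from l in the underlying graph of G such that Player 1 has an observation-based strategy that is almost-sure winning for Safe(T) from l'. -/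
open scoped ENNReal

namespace POMDP
section Aux
variable {L A O : Type}
variable {M : POMDP L A O} {T : Set L}

-- new defs
attribute [local instance] Classical.propDecidable

def lastSt : L → List (A × L) → L
  | l, [] => l
  | _, (_, l') :: h => lastSt l' h

def shiftStrat (α : Strategy L A) (l : L) (G : List (A × L)) : Strategy L A :=
  fun _ h => α l (G ++ h)

variable {M : POMDP L A O} {T : Set L}

lemma prefProbAux_le_one (M : POMDP L A O) :
    ∀ (h : List (A × L)) (π : List (A × L) → PMF A) (l : L), M.prefProbAux π l h ≤ 1
  | [], _, _ => le_refl _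
  | (a, l') :: h, π, l => by
      rw [prefProbAux]
      have h1 := PMF.coe_le_one (π []) a
      have h2 := PMF.coe_le_one (M.δ l a) l'
      have h3 := prefProbAux_le_one M h (fun h' => π ((a, l') :: h')) l'
      calc π [] a * (M.δ l a) l' * M.prefProbAux (fun h' => π ((a, l') :: h')) l' h
          ≤ 1 * 1 * 1 := by gcongr
        _ = 1 := by ring

lemma prefProbAux_pos_reach (M : POMDP L A O) :
    ∀ (h : List (A × L)) (π : List (A × L) → PMF A) (l : L),
      0 < M.prefProbAux π l h → Relation.ReflTransGen M.Edge l (lastSt l h)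
  | [], _, _, _ => Relation.ReflTransGen.refl
  | (a, l') :: h, π, l, hpos => by
      rw [prefProbAux] at hpos
      have h1 : 0 < (M.δ l a) l' := by
        by_contra hc
        push_neg at hc
        have : (M.δ l a) l' = 0 := le_antisymm hc zero_le
        simp [this] at hpos
      have h2 : 0 < M.prefProbAux (fun h' => π ((a, l') :: h')) l' h := by
        by_contra hc
        push_neg at hc
        have : M.prefProbAux (fun h' => π ((a, l') :: h')) l' h = 0 :=
          le_antisymm hc zero_le
        simp [this] at hpos
      exact Relation.ReflTransGen.head ⟨a, h1⟩
        (prefProbAux_pos_reach M h (fun h' => π ((a, l') :: h')) l' h2)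

lemma horizonProb_eq_sum [Fintype L] [Fintype A] (α : Strategy L A) (l : L) (n : ℕ)
    (P : List (A × L) → Prop) :
    M.horizonProb α l n P =
      ∑ f : Fin n → A × L, if P (List.ofFn f) then M.prefProb α l (List.ofFn f) else 0 := by
  unfold horizonProb
  refine Finset.sum_congr rfl fun f _ => ?_
  rw [Set.indicator_apply]
  simp only [Set.mem_setOf_eq]

lemma horizonProb_congr_strat [Fintype L] [Fintype A] {α β : Strategy L A} {l : L}
    (hl : α l = β l) (n : ℕ) (P : List (A × L) → Prop) :
    M.horizonProb α l n P = M.horizonProb β l n P := by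
  unfold horizonProb prefProb
  rw [hl]

lemma horizonProb_congr_pred [Fintype L] [Fintype A] (α : Strategy L A) (l : L) (n : ℕ)
    {P Q : List (A × L) → Prop} (hPQ : ∀ h, P h ↔ Q h) :
    M.horizonProb α l n P = M.horizonProb α l n Q := by
  unfold horizonProb
  have : {g : Fin n → A × L | P (List.ofFn g)} = {g : Fin n → A × L | Q (List.ofFn g)} := by
    ext g; exact hPQ _
  rw [this]

lemma horizonProb_step [Fintype L] [Fintype A] (α : Strategy L A) (l : L) (n : ℕ)
    (P : List (A × L) → Prop) :
    M.horizonProb α l (n + 1) P =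
      ∑ x : A × L, (α l [] x.1 * M.δ l x.1 x.2) *
        M.horizonProb (shiftStrat α l [x]) x.2 n (fun h => P (x :: h)) := by
  rw [horizonProb_eq_sum]
  rw [← Equiv.sum_comp (Fin.consEquiv fun _ : Fin (n+1) => A × L)
    (fun f => if P (List.ofFn f) then M.prefProb α l (List.ofFn f) else 0)]
  rw [Fintype.sum_prod_type]
  refine Finset.sum_congr rfl fun x _ => ?_
  rw [horizonProb_eq_sum, Finset.mul_sum]
  refine Finset.sum_congr rfl fun g _ => ?_
  have hofn : List.ofFn ((Fin.consEquiv fun _ : Fin (n+1) => A × L) (x, g)) = x :: List.ofFn g := by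
    rw [List.ofFn_succ]
    simp [Fin.consEquiv]
  rw [hofn]
  obtain ⟨a, l'⟩ := x
  have hpref : M.prefProb α l ((a, l') :: List.ofFn g) =
      (α l [] a * M.δ l a l') * M.prefProb (shiftStrat α l [(a, l')]) l' (List.ofFn g) := rfl
  rw [hpref]
  split <;> simp [mul_comm, mul_assoc, mul_left_comm]

lemma horizonProb_split [Fintype L] [Fintype A] (m : ℕ) :
    ∀ (k : ℕ) (α : Strategy L A) (l : L) (P : List (A × L) → Prop),
    M.horizonProb α l (k + m) P =
      ∑ g : Fin k → A × L, M.prefProb α l (List.ofFn g) *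
        M.horizonProb (shiftStrat α l (List.ofFn g)) (lastSt l (List.ofFn g)) m
          (fun h => P (List.ofFn g ++ h))
  | 0, α, l, P => by
      rw [Nat.zero_add, Fintype.sum_unique]
      have h0 : (default : Fin 0 → A × L) = fun i => i.elim0 := Subsingleton.elim _ _
      rw [h0, List.ofFn_zero]
      have h1 : M.prefProb α l [] = 1 := rfl
      rw [h1, one_mul]
      have h2 : α l = shiftStrat α l [] l := rfl
      rw [horizonProb_congr_strat h2 m P]
      exact horizonProb_congr_pred _ _ _ (fun h => by rw [List.nil_append])
  | (k+1), α, l, P => by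
      rw [Nat.succ_add, horizonProb_step]
      have hIH : ∀ (x : A × L),
          M.horizonProb (shiftStrat α l [x]) x.2 (k + m) (fun h => P (x :: h)) =
          ∑ g : Fin k → A × L,
            M.prefProb (shiftStrat α l [x]) x.2 (List.ofFn g) *
              M.horizonProb (shiftStrat (shiftStrat α l [x]) x.2 (List.ofFn g))
                (lastSt x.2 (List.ofFn g)) m (fun h => P (x :: (List.ofFn g ++ h))) :=
        fun x => horizonProb_split m k (shiftStrat α l [x]) x.2 (fun h => P (x :: h))
      calc ∑ x : A × L, (α l [] x.1 * M.δ l x.1 x.2) *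
            M.horizonProb (shiftStrat α l [x]) x.2 (k + m) (fun h => P (x :: h))
          = ∑ x : A × L, ∑ g : Fin k → A × L,
              M.prefProb α l (x :: List.ofFn g) *
                M.horizonProb (shiftStrat α l (x :: List.ofFn g))
                  (lastSt l (x :: List.ofFn g)) m (fun h => P ((x :: List.ofFn g) ++ h)) := by
            refine Finset.sum_congr rfl fun x _ => ?_
            rw [hIH x, Finset.mul_sum]
            refine Finset.sum_congr rfl fun g _ => ?_
            obtain ⟨a, l'⟩ := x
            have e1 : M.prefProb α l ((a, l') :: List.ofFn g) =
                (α l [] (a, l').1 * M.δ l (a, l').1 (a, l').2) *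
                  M.prefProb (shiftStrat α l [(a, l')]) l' (List.ofFn g) := rfl
            rw [e1, mul_assoc]
            rw [← mul_assoc, ← mul_assoc]
            rfl
        _ = ∑ g : Fin (k+1) → A × L, M.prefProb α l (List.ofFn g) *
              M.horizonProb (shiftStrat α l (List.ofFn g)) (lastSt l (List.ofFn g)) m
                (fun h => P (List.ofFn g ++ h)) := by
            conv_rhs => rw [← Equiv.sum_comp (Fin.consEquiv fun _ : Fin (k+1) => A × L)
              (fun g : Fin (k+1) → A × L => M.prefProb α l (List.ofFn g) *
              M.horizonProb (shiftStrat α l (List.ofFn g)) (lastSt l (List.ofFn g)) m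
                (fun h => P (List.ofFn g ++ h))), Fintype.sum_prod_type]
            refine Finset.sum_congr rfl fun x _ => Finset.sum_congr rfl fun g _ => ?_
            have hofn : List.ofFn ((Fin.consEquiv fun _ : Fin (k+1) => A × L) (x, g)) = x :: List.ofFn g := by
              rw [List.ofFn_succ]; simp [Fin.consEquiv]
            rw [hofn]

lemma horizonProb_true [Fintype L] [Fintype A] :
    ∀ (n : ℕ) (α : Strategy L A) (l : L),
      M.horizonProb α l n (fun _ => True) = 1
  | 0, α, l => by
      rw [horizonProb_eq_sum, Fintype.sum_unique, if_pos trivial]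
      rfl
  | (n+1), α, l => by
      rw [horizonProb_step]
      have : ∀ x : A × L, M.horizonProb (shiftStrat α l [x]) x.2 n (fun _ => True) = 1 :=
        fun x => horizonProb_true n _ _
      simp only [this, mul_one]
      rw [Fintype.sum_prod_type]
      have e1 : ∀ a : A, ∑ l' : L, α l [] a * M.δ l a l' = α l [] a := by
        intro a
        rw [← Finset.mul_sum]
        have : ∑ l' : L, M.δ l a l' = 1 := by
          rw [← tsum_fintype (L := SummationFilter.unconditional _)]; exact (M.δ l a).tsum_coe
        rw [this, mul_one]
      simp only [e1]
      rw [← tsum_fintype (L := SummationFilter.unconditional _)]; exact (α l []).tsum_coe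

lemma horizonProb_le_one [Fintype L] [Fintype A] (α : Strategy L A) (l : L) (n : ℕ)
    (P : List (A × L) → Prop) : M.horizonProb α l n P ≤ 1 := by
  rw [← horizonProb_true (M := M) n α l, horizonProb_eq_sum, horizonProb_eq_sum]
  refine Finset.sum_le_sum fun f _ => ?_
  split
  · rw [if_pos trivial]
  · rw [if_pos trivial]; exact zero_le

lemma horizonProb_of_false [Fintype L] [Fintype A] (α : Strategy L A) (l : L) (n : ℕ)
    {P : List (A × L) → Prop} (hP : ∀ h, ¬ P h) : M.horizonProb α l n P = 0 := by
  rw [horizonProb_eq_sum]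
  refine Finset.sum_eq_zero fun f _ => ?_
  rw [if_neg (hP _)]

lemma horizonProb_add_le [Fintype L] [Fintype A] (α : Strategy L A) (l : L) (n m : ℕ)
    {P : List (A × L) → Prop} (hP : ∀ X Y, P (X ++ Y) → P X) :
    M.horizonProb α l (n + m) P ≤ M.horizonProb α l n P := by
  rw [horizonProb_split m n α l P, horizonProb_eq_sum]
  refine Finset.sum_le_sum fun g _ => ?_
  by_cases hg : P (List.ofFn g)
  · rw [if_pos hg]
    exact mul_le_of_le_one_right zero_le (horizonProb_le_one _ _ _ _)
  · rw [if_neg hg]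
    rw [horizonProb_of_false _ _ _ (fun h hPh => hg (hP _ _ hPh))]
    rw [mul_zero]

lemma horizonProb_antitone [Fintype L] [Fintype A] (α : Strategy L A) (l : L)
    {P : List (A × L) → Prop} (hP : ∀ X Y, P (X ++ Y) → P X) :
    Antitone (fun n => M.horizonProb α l n P) := by
  intro a b hab
  have : a + (b - a) = b := by omega
  calc M.horizonProb α l b P = M.horizonProb α l (a + (b - a)) P := by rw [this]
    _ ≤ M.horizonProb α l a P := horizonProb_add_le α l a _ hP

lemma iInf_sum_mul {ι : Type} [Fintype ι] (c : ι → ℝ≥0∞) (r : ι → ℕ → ℝ≥0∞)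
    (hc : ∀ i, c i ≤ 1) (hr1 : ∀ i m, r i m ≤ 1) (hr : ∀ i, Antitone (r i)) :
    ⨅ m, ∑ i, c i * r i m = ∑ i, c i * ⨅ m, r i m := by
  have h1 : Antitone (fun m => ∑ i, c i * r i m) := fun a b hab =>
    Finset.sum_le_sum fun i _ => mul_le_mul_right (hr i hab) _
  have t1 := tendsto_atTop_iInf h1
  have t2 : Filter.Tendsto (fun m => ∑ i, c i * r i m) Filter.atTop
      (nhds (∑ i, c i * ⨅ m, r i m)) := by
    refine tendsto_finset_sum _ fun i _ => ?_
    refine ENNReal.Tendsto.const_mul (tendsto_atTop_iInf (hr i)) (Or.inr ?_)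
    exact ((hc i).trans_lt ENNReal.one_lt_top).ne
  exact tendsto_nhds_unique t1 t2

lemma statesOf_append (l : L) (X Y : List (A × L)) :
    statesOf l (X ++ Y) = statesOf l X ++ Y.map Prod.snd := by
  simp [statesOf]

lemma drop_statesOf :
    ∀ (G : List (A × L)) (l : L) (h : List (A × L)),
      (statesOf l (G ++ h)).drop G.length = statesOf (lastSt l G) h
  | [], l, h => rfl
  | (a, l') :: G, l, h => drop_statesOf G l' h

lemma lastSt_mem : ∀ (G : List (A × L)) (l : L), lastSt l G ∈ statesOf l G
  | [], l => List.mem_singleton_self l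
  | (a, l') :: G, l => by
      have := lastSt_mem G l'
      simp only [statesOf, lastSt] at this ⊢
      exact List.mem_cons_of_mem _ this

lemma forall_ge_iff_drop (X : List L) (k : ℕ) (T : Set L) :
    (∀ j, ∀ hj : j < X.length, k ≤ j → X.get ⟨j, hj⟩ ∈ T) ↔ ∀ s ∈ X.drop k, s ∈ T := by
  constructor
  · intro H s hs
    obtain ⟨i, hi, rfl⟩ := List.mem_iff_getElem.1 hs
    rw [List.getElem_drop]
    have hlen : k + i < X.length := by
      have := (List.length_drop (i := k) (l := X)) ▸ hi
      omega
    exact H (k + i) hlen (Nat.le_add_right _ _)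
  · intro H j hj hkj
    have hlen : j - k < (X.drop k).length := by
      rw [List.length_drop]; omega
    have h2 : X.get ⟨j, hj⟩ = X[j] := rfl
    have h3 : X[j] = (X.drop k)[j - k]'hlen := by
      rw [List.getElem_drop]
      congr 1
      omega
    rw [h2, h3]
    exact H _ (List.getElem_mem _)

lemma shiftStrat_observationBased {α : Strategy L A} (hα : M.ObservationBased α)
    (l : L) (G : List (A × L)) : M.ObservationBased (shiftStrat α l G) := by
  intro s s' h h' _ hfst hsnd
  exact hα l l (G ++ h) (G ++ h') rfl (by simp [hfst]) (by simp [hsnd])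

lemma cond_drop_congr [Fintype L] [Fintype A] (α : Strategy L A) (l : L) (n k : ℕ)
    (T : Set L) :
    M.horizonProb α l n (fun h => ∀ j, ∀ hj : j < (statesOf l h).length,
        k ≤ j → (statesOf l h).get ⟨j, hj⟩ ∈ T) =
      M.horizonProb α l n (fun h => ∀ s ∈ (statesOf l h).drop k, s ∈ T) :=
  horizonProb_congr_pred α l n (fun h => forall_ge_iff_drop _ _ _)

lemma dropPred_prefixClosed (l : L) (k : ℕ) (T : Set L) :
    ∀ X Y : List (A × L), (∀ s ∈ (statesOf l (X ++ Y)).drop k, s ∈ T) →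
      ∀ s ∈ (statesOf l X).drop k, s ∈ T := by
  intro X Y hxy s hs
  by_cases hk : k ≤ (statesOf l X).length
  · refine hxy s ?_
    rw [statesOf_append, List.drop_append_of_le_length hk]
    exact List.mem_append_left _ hs
  · rw [List.drop_eq_nil_of_le (by omega)] at hs
    simp at hs

lemma safePred_prefixClosed (l : L) (T : Set L) :
    ∀ X Y : List (A × L), (∀ s ∈ statesOf l (X ++ Y), s ∈ T) →
      ∀ s ∈ statesOf l X, s ∈ T := by
  intro X Y hxy s hs
  refine hxy s ?_
  rw [statesOf_append]
  exact List.mem_append_left _ hs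

lemma iInf_le_sum_shift [Fintype L] [Fintype A] (α : Strategy L A) (l : L)
    {P : List (A × L) → Prop} (hP : ∀ X Y, P (X ++ Y) → P X) (n : ℕ) :
    (⨅ n', M.horizonProb α l n' P) ≤
      ∑ g : Fin n → A × L, M.prefProb α l (List.ofFn g) *
        ⨅ m, M.horizonProb (shiftStrat α l (List.ofFn g)) (lastSt l (List.ofFn g)) m
          (fun h => P (List.ofFn g ++ h)) := by
  have h1 : (⨅ n', M.horizonProb α l n' P) ≤ ⨅ m, M.horizonProb α l (n + m) P :=
    le_iInf fun m => iInf_le _ _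
  refine h1.trans_eq ?_
  have h2 : ∀ m, M.horizonProb α l (n + m) P =
      ∑ g : Fin n → A × L, M.prefProb α l (List.ofFn g) *
        M.horizonProb (shiftStrat α l (List.ofFn g)) (lastSt l (List.ofFn g)) m
          (fun h => P (List.ofFn g ++ h)) := fun m =>
    horizonProb_split m n α l P
  rw [iInf_congr h2]
  exact iInf_sum_mul _ _ (fun g => prefProbAux_le_one M _ _ _)
    (fun g m => horizonProb_le_one _ _ _ _)
    (fun g => horizonProb_antitone _ _ (fun X Y hxy => hP _ Y (by rwa [List.append_assoc])))

lemma safeProb_le_one [Fintype L] [Fintype A] (α : Strategy L A) (l : L) (T : Set L) :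
    M.safeProb α l T ≤ 1 :=
  le_trans (iInf_le _ 0) (horizonProb_le_one _ _ _ _)

lemma safeProb_le_coBuchiX [Fintype L] [Fintype A] (α : Strategy L A) (l : L) (T : Set L) :
    M.safeProb α l T ≤ M.coBuchiProb α l T := by
  refine le_trans ?_ (le_iSup _ 0)
  refine le_iInf fun n => ?_
  refine (iInf_le _ n).trans_eq ?_
  rw [cond_drop_congr]
  refine horizonProb_congr_pred α l n fun h => ?_
  rw [List.drop_zero]

lemma exists_pos_safe [Fintype L] [Fintype A] {α : Strategy L A}
    (hα : M.ObservationBased α) (l : L) (T : Set L)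
    (hpos : 0 < M.coBuchiProb α l T) :
    ∃ l1, M.ReachableFrom l l1 ∧ ∃ γ, M.ObservationBased γ ∧ 0 < M.safeProb γ l1 T := by
  obtain ⟨k, hk⟩ := lt_iSup_iff.mp hpos
  rw [iInf_congr (fun n => cond_drop_congr α l n k T)] at hk
  have hPpc := dropPred_prefixClosed (A := A) l k T
  have hsum := hk.trans_le (iInf_le_sum_shift α l hPpc k)
  have hex : ∃ g : Fin k → A × L, 0 < M.prefProb α l (List.ofFn g) *
      ⨅ m, M.horizonProb (shiftStrat α l (List.ofFn g)) (lastSt l (List.ofFn g)) m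
        (fun h => ∀ s ∈ (statesOf l (List.ofFn g ++ h)).drop k, s ∈ T) := by
    by_contra hcon
    push_neg at hcon
    rw [Finset.sum_eq_zero (fun g _ => le_antisymm (hcon g) zero_le)] at hsum
    exact lt_irrefl 0 hsum
  obtain ⟨g, hg⟩ := hex
  rw [CanonicallyOrderedAdd.mul_pos] at hg
  obtain ⟨hc, hq⟩ := hg
  refine ⟨lastSt l (List.ofFn g), prefProbAux_pos_reach M _ _ _ hc,
    shiftStrat α l (List.ofFn g), shiftStrat_observationBased hα _ _, ?_⟩
  have hlen : (List.ofFn g).length = k := List.length_ofFn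
  have heq : ∀ m, M.horizonProb (shiftStrat α l (List.ofFn g)) (lastSt l (List.ofFn g)) m
      (fun h => ∀ s ∈ (statesOf l (List.ofFn g ++ h)).drop k, s ∈ T) =
      M.horizonProb (shiftStrat α l (List.ofFn g)) (lastSt l (List.ofFn g)) m
      (fun h => ∀ s ∈ statesOf (lastSt l (List.ofFn g)) h, s ∈ T) := by
    intro m
    refine horizonProb_congr_pred _ _ _ fun h => ?_
    obtain ⟨G, hG⟩ : ∃ G : List (A × L), List.ofFn g = G := ⟨_, rfl⟩
    rw [hG] at hlen ⊢
    rw [← hlen, drop_statesOf]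
  unfold safeProb
  rw [← iInf_congr heq]
  exact hq

lemma value_improve [Fintype L] [Fintype A] {γ : Strategy L A}
    (hγ : M.ObservationBased γ) (l1 : L) (T : Set L)
    (hp : 0 < M.safeProb γ l1 T) {ε : ℝ≥0∞} (hε0 : 0 < ε) (hεtop : ε ≠ ⊤) :
    ∃ l2, M.ReachableFrom l1 l2 ∧ ∃ β, M.ObservationBased β ∧
      1 ≤ M.safeProb β l2 T + ε := by
  by_contra hcon
  push_neg at hcon
  set SP : List (A × L) → Prop := fun h => ∀ s ∈ statesOf l1 h, s ∈ T with hSP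
  have hSPpc := safePred_prefixClosed (A := A) l1 T
  set p := M.safeProb γ l1 T with hpdef
  have key : ∀ n : ℕ, p ≤ (1 - ε) * M.horizonProb γ l1 n SP := by
    intro n
    have h1 : p ≤ ∑ g : Fin n → A × L, M.prefProb γ l1 (List.ofFn g) *
        ⨅ m, M.horizonProb (shiftStrat γ l1 (List.ofFn g)) (lastSt l1 (List.ofFn g)) m
          (fun h => SP (List.ofFn g ++ h)) := iInf_le_sum_shift γ l1 hSPpc n
    refine h1.trans ?_
    rw [horizonProb_eq_sum, Finset.mul_sum]
    refine Finset.sum_le_sum fun g _ => ?_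
    by_cases hc : M.prefProb γ l1 (List.ofFn g) = 0
    · rw [hc, zero_mul]; exact zero_le
    by_cases hs : SP (List.ofFn g)
    · have hreach := prefProbAux_pos_reach M _ _ _ (pos_iff_ne_zero.2 hc)
      have hq : (⨅ m, M.horizonProb (shiftStrat γ l1 (List.ofFn g))
          (lastSt l1 (List.ofFn g)) m (fun h => SP (List.ofFn g ++ h))) =
          M.safeProb (shiftStrat γ l1 (List.ofFn g)) (lastSt l1 (List.ofFn g)) T := by
        refine iInf_congr fun m => horizonProb_congr_pred _ _ _ fun h => ?_
        constructor
        · intro H s hsm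
          rcases List.mem_cons.mp hsm with rfl | hsm'
          · exact H _ (by rw [statesOf_append]
                          exact List.mem_append_left _ (lastSt_mem _ l1))
          · exact H s (by rw [statesOf_append]
                          exact List.mem_append_right _ hsm')
        · intro H s hsm
          rw [statesOf_append] at hsm
          rcases List.mem_append.mp hsm with h1 | h2
          · exact hs s h1
          · exact H s (List.mem_cons_of_mem _ h2)
      rw [hq]
      have hlt := hcon (lastSt l1 (List.ofFn g)) hreach
        (shiftStrat γ l1 (List.ofFn g)) (shiftStrat_observationBased hγ _ _)
      have hle : M.safeProb (shiftStrat γ l1 (List.ofFn g)) (lastSt l1 (List.ofFn g)) T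
          ≤ 1 - ε := ENNReal.le_sub_of_add_le_right hεtop hlt.le
      rw [if_pos hs]
      calc M.prefProb γ l1 (List.ofFn g) *
            M.safeProb (shiftStrat γ l1 (List.ofFn g)) (lastSt l1 (List.ofFn g)) T
          ≤ M.prefProb γ l1 (List.ofFn g) * (1 - ε) := mul_le_mul_right hle _
        _ = (1 - ε) * M.prefProb γ l1 (List.ofFn g) := mul_comm _ _
    · have hz : (⨅ m, M.horizonProb (shiftStrat γ l1 (List.ofFn g))
          (lastSt l1 (List.ofFn g)) m (fun h => SP (List.ofFn g ++ h))) = 0 := by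
        refine le_antisymm (le_trans (iInf_le _ 0) ?_) zero_le
        rw [horizonProb_of_false _ _ _ (fun h hPh => hs (hSPpc _ h hPh))]
      rw [hz, mul_zero, if_neg hs]
      exact zero_le
  have hS : Antitone (fun n => M.horizonProb γ l1 n SP) := horizonProb_antitone _ _ hSPpc
  have t1 : Filter.Tendsto (fun n => M.horizonProb γ l1 n SP) Filter.atTop (nhds p) :=
    tendsto_atTop_iInf hS
  have t2 : Filter.Tendsto (fun n => (1 - ε) * M.horizonProb γ l1 n SP) Filter.atTop
      (nhds ((1 - ε) * p)) :=
    ENNReal.Tendsto.const_mul t1 (Or.inr (tsub_le_self.trans_lt ENNReal.one_lt_top).ne)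
  have hple : p ≤ (1 - ε) * p := ge_of_tendsto t2 (Filter.Eventually.of_forall key)
  have hp1 : p ≤ 1 := safeProb_le_one _ _ _
  have hlt : (1 - ε) * p < 1 * p :=
    (ENNReal.mul_lt_mul_iff_left hp.ne' (hp1.trans_lt ENNReal.one_lt_top).ne).2
      (ENNReal.sub_lt_self ENNReal.one_ne_top one_ne_zero hε0.ne')
  rw [one_mul] at hlt
  exact absurd (hple.trans_lt hlt) (lt_irrefl p)

lemma coBuchi_step [Fintype L] [Fintype A] (l0 l1 : L) (T : Set L)
    (hE : M.Edge l0 l1) {β : Strategy L A} (hβ : M.ObservationBased β)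
    (h : 0 < M.coBuchiProb β l1 T) :
    ∃ β', M.ObservationBased β' ∧ 0 < M.coBuchiProb β' l0 T := by
  obtain ⟨a, ha⟩ := hE
  obtain ⟨k, hk⟩ := lt_iSup_iff.mp h
  rw [iInf_congr (fun n => cond_drop_congr β l1 n k T)] at hk
  classical
  refine ⟨fun s h => match h with
    | [] => PMF.pure a
    | x :: h' => β x.2 h', ?_, ?_⟩
  · intro s s' h h' _ hfst hsnd
    match h, h' with
    | [], [] => rfl
    | [], x :: t => simp at hfst
    | x :: t, [] => simp at hfst
    | x :: t, y :: t' =>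
      simp only [List.map_cons, List.cons.injEq] at hfst hsnd
      exact hβ x.2 y.2 t t' hsnd.1 hfst.2 hsnd.2
  · set β' : Strategy L A := fun s h => match h with
      | [] => PMF.pure a
      | x :: h' => β x.2 h' with hβ'def
    show 0 < M.coBuchiProb β' l0 T
    have claim : ∀ n : ℕ, (M.δ l0 a l1) *
        (⨅ n', M.horizonProb β l1 n' (fun h => ∀ s ∈ (statesOf l1 h).drop k, s ∈ T)) ≤
        M.horizonProb β' l0 n (fun h => ∀ s ∈ (statesOf l0 h).drop (k + 1), s ∈ T) := by
      intro n
      match n with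
      | 0 =>
        have h0 : M.horizonProb β' l0 0
            (fun h => ∀ s ∈ (statesOf l0 h).drop (k + 1), s ∈ T) = 1 := by
          rw [horizonProb_eq_sum, Fintype.sum_unique, if_pos]
          · rfl
          · intro s hs
            rw [show (default : Fin 0 → A × L) = fun i => i.elim0 from Subsingleton.elim _ _,
              List.ofFn_zero] at hs
            simp [statesOf] at hs
        rw [h0]
        exact mul_le_one' (PMF.coe_le_one _ _)
          (le_trans (iInf_le _ 0) (horizonProb_le_one _ _ _ _))
      | (n + 1) =>
        rw [horizonProb_step]
        have hterm : (M.δ l0 a l1) *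
            (⨅ n', M.horizonProb β l1 n' (fun h => ∀ s ∈ (statesOf l1 h).drop k, s ∈ T)) ≤
            (β' l0 [] (a, l1).1 * M.δ l0 (a, l1).1 (a, l1).2) *
              M.horizonProb (shiftStrat β' l0 [(a, l1)]) (a, l1).2 n
                (fun h => ∀ s ∈ (statesOf l0 ((a, l1) :: h)).drop (k + 1), s ∈ T) := by
          have hpure : β' l0 [] (a, l1).1 = 1 := by
            show (PMF.pure a) a = 1
            simp
          have hstrat : M.horizonProb (shiftStrat β' l0 [(a, l1)]) (a, l1).2 n
              (fun h => ∀ s ∈ (statesOf l0 ((a, l1) :: h)).drop (k + 1), s ∈ T) =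
              M.horizonProb β l1 n (fun h => ∀ s ∈ (statesOf l1 h).drop k, s ∈ T) := by
            have e := horizonProb_congr_strat (M := M)
              (α := shiftStrat β' l0 [(a, l1)]) (β := β) (l := l1) rfl n
              (fun h => ∀ s ∈ (statesOf l0 ((a, l1) :: h)).drop (k + 1), s ∈ T)
            rw [e]
            refine horizonProb_congr_pred _ _ _ fun h => ?_
            have : statesOf l0 ((a, l1) :: h) = l0 :: statesOf l1 h := rfl
            rw [this, List.drop_succ_cons]
          rw [hstrat, hpure, one_mul]
          exact mul_le_mul_right (iInf_le _ n) _
        refine hterm.trans ?_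
        exact Finset.single_le_sum (f := fun x : A × L =>
          (β' l0 [] x.1 * M.δ l0 x.1 x.2) *
            M.horizonProb (shiftStrat β' l0 [x]) x.2 n
              (fun h => ∀ s ∈ (statesOf l0 (x :: h)).drop (k + 1), s ∈ T))
          (fun x _ => zero_le) (Finset.mem_univ (a, l1))
    have hpos2 : 0 < (M.δ l0 a l1) *
        (⨅ n', M.horizonProb β l1 n' (fun h => ∀ s ∈ (statesOf l1 h).drop k, s ∈ T)) :=
      ENNReal.mul_pos ha.ne' hk.ne'
    refine hpos2.trans_le ?_
    refine le_trans (le_iInf claim) ?_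
    refine le_trans ?_ (le_iSup _ (k + 1))
    rw [iInf_congr (fun n => cond_drop_congr β' l0 n (k + 1) T)]

noncomputable def pAfn (M : POMDP L A O) :
    (List (A × L) → A → ℝ≥0∞) → L → List (A × L) → ℝ≥0∞
  | _, _, [] => 1
  | c, l, (a, l') :: h =>
      min (c [] a) 1 * M.δ l a l' * pAfn M (fun h' => c ((a, l') :: h')) l' h

lemma pAfn_eq (M : POMDP L A O) :
    ∀ (h : List (A × L)) (π : List (A × L) → PMF A) (l : L),
      M.prefProbAux π l h = pAfn M (fun h' a => π h' a) l h
  | [], _, _ => rfl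
  | (a, l') :: h, π, l => by
      rw [prefProbAux, pAfn, min_eq_left (PMF.coe_le_one _ _),
        pAfn_eq M h (fun h' => π ((a, l') :: h')) l']

lemma pAfn_le_one (M : POMDP L A O) :
    ∀ (h : List (A × L)) (c : List (A × L) → A → ℝ≥0∞) (l : L), pAfn M c l h ≤ 1
  | [], _, _ => le_refl _
  | (a, l') :: h, c, l => by
      rw [pAfn]
      calc min (c [] a) 1 * M.δ l a l' * pAfn M (fun h' => c ((a, l') :: h')) l' h
          ≤ 1 * 1 * 1 := by
            gcongr
            · exact min_le_right _ _
            · exact PMF.coe_le_one _ _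
            · exact pAfn_le_one M h _ l'
        _ = 1 := by ring

lemma cont_mul_bdd {X : Type} [TopologicalSpace X] {f g : X → ℝ≥0∞}
    (hf : Continuous f) (hg : Continuous g) (hf1 : ∀ x, f x ≤ 1) (hg1 : ∀ x, g x ≤ 1) :
    Continuous (fun x => f x * g x) := by
  rw [continuous_iff_continuousAt]
  intro x
  exact ENNReal.Tendsto.mul hf.continuousAt
    (Or.inr ((hg1 x).trans_lt ENNReal.one_lt_top).ne) hg.continuousAt
    (Or.inr ((hf1 x).trans_lt ENNReal.one_lt_top).ne)

lemma pAfn_continuous (M : POMDP L A O) :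
    ∀ (h : List (A × L)) (l : L),
      Continuous (fun c : List (A × L) → A → ℝ≥0∞ => pAfn M c l h)
  | [], _ => continuous_const
  | (a, l') :: h, l => by
      have h1 : Continuous (fun c : List (A × L) → A → ℝ≥0∞ => min (c [] a) 1) :=
        ((continuous_apply a).comp (continuous_apply ([] : List (A × L)))).min
          continuous_const
      have h2 : Continuous (fun c : List (A × L) → A → ℝ≥0∞ =>
          min (c [] a) 1 * M.δ l a l') :=
        cont_mul_bdd h1 continuous_const (fun _ => min_le_right _ _)
          (fun _ => PMF.coe_le_one _ _)
      have hres : Continuous (fun c : List (A × L) → A → ℝ≥0∞ =>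
          (fun h' a' => c ((a, l') :: h') a' : List (A × L) → A → ℝ≥0∞)) :=
        continuous_pi fun h' => continuous_pi fun a' =>
          (continuous_apply a').comp (continuous_apply _)
      exact cont_mul_bdd h2 ((pAfn_continuous M h l').comp hres)
        (fun _ => mul_le_one' (min_le_right _ _) (PMF.coe_le_one _ _))
        (fun c => pAfn_le_one M h _ l')

noncomputable def GHfn (M : POMDP L A O) [Fintype L] [Fintype A]
    (c : L → List (A × L) → A → ℝ≥0∞) (l : L) (n : ℕ) (P : List (A × L) → Prop) : ℝ≥0∞ :=
  ∑ f : Fin n → A × L, if P (List.ofFn f) then pAfn M (c l) l (List.ofFn f) else 0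

lemma GHfn_eq [Fintype L] [Fintype A] (α : Strategy L A) (l : L) (n : ℕ)
    (P : List (A × L) → Prop) :
    M.horizonProb α l n P = GHfn M (fun l h a => α l h a) l n P := by
  rw [horizonProb_eq_sum]
  refine Finset.sum_congr rfl fun f _ => ?_
  split
  · exact pAfn_eq M (List.ofFn f) (α l) l
  · rfl

lemma GHfn_continuous (M : POMDP L A O) [Fintype L] [Fintype A] (l : L) (n : ℕ)
    (P : List (A × L) → Prop) :
    Continuous (fun c : L → List (A × L) → A → ℝ≥0∞ => GHfn M c l n P) := by
  refine continuous_finset_sum _ fun f _ => ?_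
  by_cases hP : P (List.ofFn f)
  · simp only [if_pos hP]
    exact (pAfn_continuous M (List.ofFn f) l).comp (continuous_apply l)
  · simp only [if_neg hP]
    exact continuous_const

lemma exists_as_safe [Fintype L] [Fintype A] (M : POMDP L A O) (T : Set L) (l2 : L)
    (hval : ∀ N : ℕ, ∃ β : Strategy L A, M.ObservationBased β ∧
      1 ≤ M.safeProb β l2 T + ((N : ℝ≥0∞) + 1)⁻¹) :
    ∃ β : Strategy L A, M.ObservationBased β ∧ M.safeProb β l2 T = 1 := by
  choose γ hobs hge using hval
  set u : ℕ → (L → List (A × L) → A → ℝ≥0∞) := fun N => fun l h a => γ N l h a with hu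
  obtain ⟨c, -, hc⟩ := isCompact_univ.exists_clusterPt
    (f := Filter.map u Filter.atTop) (Filter.le_principal_iff.mpr Filter.univ_mem)
  have hc' : MapClusterPt c Filter.atTop u := hc
  have hclos : ∀ (N : ℕ) (s : Set (L → List (A × L) → A → ℝ≥0∞)), IsClosed s →
      (∀ k, N ≤ k → u k ∈ s) → c ∈ s := by
    intro N s hs hmem
    rw [← hs.closure_eq, mem_closure_iff_nhds]
    intro t ht
    obtain ⟨k, hkt, hkN⟩ :=
      ((mapClusterPt_iff_frequently.mp hc' t ht).and_eventually
        (Filter.eventually_ge_atTop N)).exists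
    exact ⟨u k, hkt, hmem k hkN⟩
  have hsum : ∀ (l : L) (h : List (A × L)), ∑ a, c l h a = 1 := by
    intro l h
    refine hclos 0 {x | ∑ a, x l h a = 1} (isClosed_eq ?_ continuous_const)
      (fun k _ => ?_)
    · exact continuous_finset_sum _ fun a _ =>
        (continuous_apply a).comp ((continuous_apply h).comp (continuous_apply l))
    · show ∑ a, γ k l h a = 1
      rw [← tsum_fintype (L := SummationFilter.unconditional _)]
      exact (γ k l h).tsum_coe
  refine ⟨fun l h => PMF.ofFintype (c l h) (hsum l h), ?_, ?_⟩
  · intro l l' h h' h1 h2 h3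
    have hcc : c l h = c l' h' := by
      refine hclos 0 {x | x l h = x l' h'} (isClosed_eq ?_ ?_) (fun k _ => ?_)
      · exact (continuous_apply h).comp (continuous_apply l)
      · exact (continuous_apply h').comp (continuous_apply l')
      · show u k l h = u k l' h'
        have := hobs k l l' h h' h1 h2 h3
        simp only [hu, this]
    refine PMF.ext fun a => ?_
    rw [PMF.ofFintype_apply, PMF.ofFintype_apply, hcc]
  · set SP : List (A × L) → Prop := fun h => ∀ s ∈ statesOf l2 h, s ∈ T with hSPdef
    have hck : (fun l h a => (PMF.ofFintype (c l h) (hsum l h) : PMF A) a) = c := by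
      funext l h a
      rw [PMF.ofFintype_apply]
    have hGH : ∀ n, M.horizonProb (fun l h => PMF.ofFintype (c l h) (hsum l h)) l2 n SP
        = GHfn M c l2 n SP := by
      intro n
      rw [GHfn_eq, hck]
    have hGc : ∀ n, GHfn M c l2 n SP = 1 := by
      intro n
      have hle1 : GHfn M c l2 n SP ≤ 1 := by
        rw [← hGH]
        exact horizonProb_le_one _ _ _ _
      refine le_antisymm hle1 ?_
      have hN : ∀ N : ℕ, 1 ≤ GHfn M c l2 n SP + ((N : ℝ≥0∞) + 1)⁻¹ := by
        intro N
        refine hclos N {x | 1 ≤ GHfn M x l2 n SP + ((N : ℝ≥0∞) + 1)⁻¹} ?_ ?_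
        · exact isClosed_le continuous_const
            ((GHfn_continuous M l2 n SP).add continuous_const)
        · intro k hk
          have hsafe : M.safeProb (γ k) l2 T ≤ GHfn M (u k) l2 n SP := by
            rw [hu]
            refine le_trans (iInf_le _ n) ?_
            rw [GHfn_eq]
          refine le_trans (hge k) ?_
          refine add_le_add hsafe ?_
          exact ENNReal.inv_le_inv.2 (add_le_add_left (Nat.cast_le.2 hk) 1)
      refine ENNReal.le_of_forall_pos_le_add fun δ hδ hlt => ?_
      obtain ⟨N, hN'⟩ := ENNReal.exists_inv_nat_lt
        (show ((δ : ℝ≥0∞)) ≠ 0 by exact_mod_cast hδ.ne')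
      refine (hN N).trans (add_le_add_right ?_ _)
      calc ((N : ℝ≥0∞) + 1)⁻¹ ≤ ((N : ℝ≥0∞))⁻¹ :=
            ENNReal.inv_le_inv.2 (le_add_of_nonneg_right zero_le)
        _ ≤ ↑δ := hN'.le
    show (⨅ n, M.horizonProb _ l2 n _) = 1
    rw [iInf_congr hGH]
    simp [hGc]

end Aux
end POMDP

/-- Player 1 has an observation-based strategy positive winning for
`coBüchi(T)` from `l` iff there is a state `l'` reachable from `l` in the
underlying graph such that Player 1 has an observation-based strategy that is
almost-sure winning for `Safe(T)` from `l'`. -/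
theorem positive_cobuchi_iff_reach_almost_safe {L A O : Type}
    [Fintype L] [Fintype A] (M : POMDP L A O) (T : Set L) (l : L) :
    (∃ α : POMDP.Strategy L A, M.ObservationBased α ∧ 0 < M.coBuchiProb α l T) ↔
      ∃ l' : L, M.ReachableFrom l l' ∧
        ∃ α : POMDP.Strategy L A, M.ObservationBased α ∧ M.safeProb α l' T = 1 := by
  constructor
  · rintro ⟨α, hα, hpos⟩
    obtain ⟨l1, hreach1, γ, hγ, hp⟩ := POMDP.exists_pos_safe hα l T hpos
    have hval : ∀ N : ℕ, ∃ l2, M.ReachableFrom l1 l2 ∧ ∃ β, M.ObservationBased β ∧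
        1 ≤ M.safeProb β l2 T + ((N : ℝ≥0∞) + 1)⁻¹ := by
      intro N
      refine POMDP.value_improve hγ l1 T hp ?_ ?_
      · exact ENNReal.inv_pos.2 (by simp)
      · exact ENNReal.inv_ne_top.2 (by simp)
    choose s hreach2 β hβ hval2 using hval
    obtain ⟨l2, hinf⟩ := Finite.exists_infinite_fiber s
    have hinfset : (s ⁻¹' {l2}).Infinite := Set.infinite_coe_iff.mp hinf
    obtain ⟨N0, hN0⟩ := hinfset.nonempty
    have hN0' : s N0 = l2 := hN0
    have hreach : M.ReachableFrom l l2 := by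
      refine Relation.ReflTransGen.trans hreach1 ?_
      rw [← hN0']
      exact hreach2 N0
    have hval3 : ∀ N : ℕ, ∃ β' : POMDP.Strategy L A, M.ObservationBased β' ∧
        1 ≤ M.safeProb β' l2 T + ((N : ℝ≥0∞) + 1)⁻¹ := by
      intro N
      obtain ⟨k, hk, hkN⟩ := hinfset.exists_gt N
      refine ⟨β k, hβ k, ?_⟩
      have h2 := hval2 k
      have hk' : s k = l2 := hk
      rw [hk'] at h2
      refine h2.trans (add_le_add_right ?_ _)
      exact ENNReal.inv_le_inv.2 (add_le_add_left (Nat.cast_le.2 hkN.le) 1)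
    obtain ⟨βs, hobss, heq⟩ := POMDP.exists_as_safe M T l2 hval3
    exact ⟨l2, hreach, βs, hobss, heq⟩
  · rintro ⟨l', hreach, α, hα, hsafe⟩
    have hr : Relation.ReflTransGen M.Edge l l' := hreach
    refine Relation.ReflTransGen.head_induction_on
      (motive := fun a _ => ∃ β : POMDP.Strategy L A,
        M.ObservationBased β ∧ 0 < M.coBuchiProb β a T) hr ?_ ?_
    · refine ⟨α, hα, ?_⟩
      refine lt_of_lt_of_le ?_ (POMDP.safeProb_le_coBuchiX α l' T)
      rw [hsafe]
      exact zero_lt_one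
    · intro a c hedge _ ih
      obtain ⟨β, hβ, hpos⟩ := ih
      exact POMDP.coBuchi_step a c T hedge hβ hpos
end
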